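/- arXiv:0903.1526 — 10 statements merged into one kernel-verified Lean document; each statement's English description precedes it below -/
import Mathlib

section
/- Let (X,d) be a metric space. Then the betweenness exponent t₀(d), defined as the supremum in [0,∞] of the set {t ∈ (0,∞) : the function (x,y) ↦ (d(x,y))^t is a metric on X}, equals the infimum in [0,∞] of the set {s ∈ [1,∞) : there exist x, y, z ∈ X with max{d(x,z), d(z,y)} < d(x,y) and (d(x,y))^s = (d(x,z))^s + (d(z,y))^s} (where the infimum of the empty set is ∞). -/
/-- `d` is a metric (distance function satisfying the metric axioms). -/
def IsMetricOn {α : Type*} (d : α → α → ℝ) : Prop :=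
  (∀ x, d x x = 0) ∧ (∀ x y, d x y = 0 → x = y) ∧ (∀ x y, d x y = d y x) ∧
    (∀ x y z, d x z ≤ d x y + d y z)

open ENNReal

private lemma cross_lt {a c t s : ℝ} (ha : 0 < a) (hac : a < c) (hts : t < s) :
    a ^ s * c ^ t < a ^ t * c ^ s := by
  have hc : 0 < c := ha.trans hac
  have h : (a / c) ^ s < (a / c) ^ t :=
    Real.rpow_lt_rpow_of_exponent_gt (div_pos ha hc) ((div_lt_one hc).mpr hac) hts
  rw [Real.div_rpow ha.le hc.le, Real.div_rpow ha.le hc.le] at h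
  exact (div_lt_div_iff₀ (Real.rpow_pos_of_pos hc s) (Real.rpow_pos_of_pos hc t)).mp h

private lemma key_lt {a b c t s : ℝ} (ha : 0 < a) (hb : 0 < b) (hac : a < c) (hbc : b < c)
    (heq : a ^ s + b ^ s = c ^ s) (hts : t < s) : c ^ t < a ^ t + b ^ t := by
  have hc : 0 < c := ha.trans hac
  have h1 := cross_lt ha hac hts
  have h2 := cross_lt hb hbc hts
  have hcs : 0 < c ^ s := Real.rpow_pos_of_pos hc s
  nlinarith [Real.rpow_pos_of_pos hc t]

private lemma key_gt {a b c t s : ℝ} (ha : 0 < a) (hb : 0 < b) (hac : a < c) (hbc : b < c)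
    (heq : a ^ s + b ^ s = c ^ s) (hst : s < t) : a ^ t + b ^ t < c ^ t := by
  have hc : 0 < c := ha.trans hac
  have h1 := cross_lt ha hac hst
  have h2 := cross_lt hb hbc hst
  have hcs : 0 < c ^ s := Real.rpow_pos_of_pos hc s
  nlinarith [Real.rpow_pos_of_pos hc t]

private lemma exists_root {a b c : ℝ} (ha : 0 < a) (hb : 0 < b) (hac : a < c) (hbc : b < c)
    (htri : c ≤ a + b) : ∃ s : ℝ, 1 ≤ s ∧ a ^ s + b ^ s = c ^ s := by
  have hc : 0 < c := ha.trans hac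
  set f : ℝ → ℝ := fun s => (a / c) ^ s + (b / c) ^ s with hf
  have hcontf : Continuous f := by
    apply Continuous.add
    · exact continuous_iff_continuousAt.mpr fun x =>
        Real.continuousAt_const_rpow (div_pos ha hc).ne'
    · exact continuous_iff_continuousAt.mpr fun x =>
        Real.continuousAt_const_rpow (div_pos hb hc).ne'
  have hf1 : 1 ≤ f 1 := by
    simp only [hf, Real.rpow_one]
    rw [← add_div, le_div_iff₀ hc, one_mul]
    exact htri
  have htend : Filter.Tendsto f Filter.atTop (nhds 0) := by
    have h1 := tendsto_rpow_atTop_of_base_lt_one (a / c)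
      (by linarith [div_pos ha hc]) ((div_lt_one hc).mpr hac)
    have h2 := tendsto_rpow_atTop_of_base_lt_one (b / c)
      (by linarith [div_pos hb hc]) ((div_lt_one hc).mpr hbc)
    simpa using h1.add h2
  have hev : ∀ᶠ s in Filter.atTop, f s < 1 :=
    htend.eventually (eventually_lt_nhds one_pos) |>.mono (fun s hs => hs)
  obtain ⟨S, hSf, hS1⟩ := (hev.and (Filter.eventually_ge_atTop (1 : ℝ))).exists
  obtain ⟨s, hsmem, hfs⟩ := intermediate_value_Icc' hS1 hcontf.continuousOn ⟨hSf.le, hf1⟩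
  refine ⟨s, hsmem.1, ?_⟩
  have hfs' : a ^ s / c ^ s + b ^ s / c ^ s = 1 := by
    rw [← Real.div_rpow ha.le hc.le, ← Real.div_rpow hb.le hc.le]; exact hfs
  have hcs : 0 < c ^ s := Real.rpow_pos_of_pos hc s
  field_simp at hfs'
  linarith

/-- Proposition 1.2': the betweenness exponent `t₀(d)`, i.e. the supremum in `[0,∞]` of the
set of `t ∈ (0,∞)` for which `(x,y) ↦ d(x,y)^t` is a metric, equals the infimum in `[0,∞]`
of the set of `s ∈ [1,∞)` for which there are points `x, y, z` with
`max {d(x,z), d(z,y)} < d(x,y)` and `d(x,y)^s = d(x,z)^s + d(z,y)^s`. -/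
theorem betweenness_exponent_eq {X : Type*} [MetricSpace X] :
    sSup {t : ℝ≥0∞ | ∃ r : ℝ, 0 < r ∧ t = ENNReal.ofReal r ∧
        IsMetricOn (fun x y : X => dist x y ^ r)} =
      sInf {s : ℝ≥0∞ | ∃ r : ℝ, 1 ≤ r ∧ s = ENNReal.ofReal r ∧
        ∃ x y z : X, max (dist x z) (dist z y) < dist x y ∧
          dist x y ^ r = dist x z ^ r + dist z y ^ r} := by
  set A := {t : ℝ≥0∞ | ∃ r : ℝ, 0 < r ∧ t = ENNReal.ofReal r ∧
      IsMetricOn (fun x y : X => dist x y ^ r)} with hA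
  set B := {s : ℝ≥0∞ | ∃ r : ℝ, 1 ≤ r ∧ s = ENNReal.ofReal r ∧
      ∃ x y z : X, max (dist x z) (dist z y) < dist x y ∧
        dist x y ^ r = dist x z ^ r + dist z y ^ r} with hB
  have hposAB : ∀ (r r' : ℝ), 0 < r → IsMetricOn (fun x y : X => dist x y ^ r) → 1 ≤ r' →
      (∃ x y z : X, max (dist x z) (dist z y) < dist x y ∧
        dist x y ^ r' = dist x z ^ r' + dist z y ^ r') → r ≤ r' := by
    rintro r r' hr hm hr'1 ⟨x, y, z, hmax, heq⟩
    set a := dist x z with hadf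
    set b := dist z y with hbdf
    set c := dist x y with hcdf
    have hac : a < c := (le_max_left _ _).trans_lt hmax
    have hbc : b < c := (le_max_right _ _).trans_lt hmax
    have hr'0 : (0 : ℝ) < r' := by linarith
    have ha0 : (0 : ℝ) ≤ a := dist_nonneg
    have hb0 : (0 : ℝ) ≤ b := dist_nonneg
    have ha : 0 < a := by
      rcases ha0.lt_or_eq with h | h
      · exact h
      · exfalso
        have h' : a = 0 := h.symm
        rw [h', Real.zero_rpow hr'0.ne'] at heq
        have := Real.rpow_lt_rpow hb0 hbc hr'0
        linarith
    have hb : 0 < b := by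
      rcases hb0.lt_or_eq with h | h
      · exact h
      · exfalso
        have h' : b = 0 := h.symm
        rw [h', Real.zero_rpow hr'0.ne'] at heq
        have := Real.rpow_lt_rpow ha0 hac hr'0
        linarith
    by_contra hcon
    push_neg at hcon
    have hkey := key_gt ha hb hac hbc heq.symm hcon
    have htri := hm.2.2.2 x z y
    simp only [← hadf, ← hbdf, ← hcdf] at htri
    linarith
  apply le_antisymm
  · refine sSup_le fun t ht => le_sInf fun s hs => ?_
    obtain ⟨r, hr, rfl, hm⟩ := ht
    obtain ⟨r', hr', rfl, hw⟩ := hs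
    exact ENNReal.ofReal_le_ofReal (hposAB r r' hr hm hr' hw)
  · by_contra hlt
    push_neg at hlt
    obtain ⟨u, h1, h2⟩ := exists_between hlt
    have hut : u ≠ ⊤ := h2.ne_top
    set t := u.toReal with htdef
    have hu : ENNReal.ofReal t = u := ENNReal.ofReal_toReal hut
    have h1A : (1 : ℝ≥0∞) ∈ A := by
      refine ⟨1, one_pos, by simp, ?_⟩
      refine ⟨fun x => by simp, fun x y h => by simpa using h, fun x y => by
        simp [dist_comm], fun x y z => by simpa using dist_triangle x y z⟩
    have h1u : (1 : ℝ≥0∞) < u := (le_sSup h1A).trans_lt h1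
    have ht0 : 0 < t := ENNReal.toReal_pos (by rintro rfl; simp at h1u) hut
    have huA : u ∈ A := by
      refine ⟨t, ht0, hu.symm, ?_, ?_, ?_, ?_⟩
      · intro x; simp [Real.zero_rpow ht0.ne']
      · intro x y h
        exact dist_eq_zero.mp ((Real.rpow_eq_zero dist_nonneg ht0.ne').mp h)
      · intro x y; simp [dist_comm]
      · intro x y z
        show dist x z ^ t ≤ dist x y ^ t + dist y z ^ t
        set a := dist x y with hadf
        set b := dist y z with hbdf
        set c := dist x z with hcdf
        rcases le_or_gt c a with h | hac
        · calc c ^ t ≤ a ^ t := Real.rpow_le_rpow dist_nonneg h ht0.le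
            _ ≤ a ^ t + b ^ t := le_add_of_nonneg_right (Real.rpow_nonneg dist_nonneg t)
        rcases le_or_gt c b with h | hbc
        · calc c ^ t ≤ b ^ t := Real.rpow_le_rpow dist_nonneg h ht0.le
            _ ≤ a ^ t + b ^ t := le_add_of_nonneg_left (Real.rpow_nonneg dist_nonneg t)
        have htri : c ≤ a + b := dist_triangle x y z
        have hb0 : (0:ℝ) ≤ b := dist_nonneg
        have ha : 0 < a := by linarith
        have hb : 0 < b := by linarith
        obtain ⟨s, hs1, hseq⟩ := exists_root ha hb hac hbc htri
        have hmem : ENNReal.ofReal s ∈ B :=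
          ⟨s, hs1, rfl, x, z, y, max_lt hac hbc, hseq.symm⟩
        have hus : u < ENNReal.ofReal s := h2.trans_le (sInf_le hmem)
        have hts : t < s := by
          rw [← hu] at hus
          exact (ENNReal.ofReal_lt_ofReal_iff (by linarith)).mp hus
        exact (key_lt ha hb hac hbc hseq hts).le
    exact absurd (le_sSup huA) h1.not_ge
end

section
/- Let (X,d) be a metric space. Then X is ultrametric if and only if for every W ⊆ X and every ε > 0 the equalities M*_ε(W) = N̂^X_ε(W) = N̂_ε(W) = M̂_ε(W) hold. -/
open Cardinal Set

universe u

/-- `C` is an `ε`-net for `W` (w.r.t. the distance function `d`): every point of `W`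
is within distance `ε` of some point of `C`. -/
def IsNet {α : Type u} (d : α → α → ℝ) (ε : ℝ) (W C : Set α) : Prop :=
  ∀ w ∈ W, ∃ c ∈ C, d w c ≤ ε

/-- `A` is `ε`-distinguishable: distinct points of `A` are at distance `> ε`. -/
def IsDistinguishable {α : Type u} (d : α → α → ℝ) (ε : ℝ) (A : Set α) : Prop :=
  ∀ x ∈ A, ∀ y ∈ A, x ≠ y → ε < d x y

/-- `N̂ᴬ_ε(W)`: the smallest cardinality of a set `C ⊆ A` which is an `ε`-net for `W`. -/
noncomputable def coveringNumberIn {α : Type u} (d : α → α → ℝ) (ε : ℝ) (A W : Set α) :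
    Cardinal.{u} :=
  sInf {κ | ∃ C : Set α, C ⊆ A ∧ IsNet d ε W C ∧ #C = κ}

/-- `M*_ε(W)`: the smallest cardinal `≥ card A` for every `ε`-distinguishable `A ⊆ W`. -/
noncomputable def packingNumberSup {α : Type u} (d : α → α → ℝ) (ε : ℝ) (W : Set α) :
    Cardinal.{u} :=
  sSup {κ | ∃ A : Set α, A ⊆ W ∧ IsDistinguishable d ε A ∧ #A = κ}

/-- `M̂_ε(W)`: the smallest cardinality of a maximal `ε`-distinguishable subset of `W`. -/
noncomputable def maximalPackingInf {α : Type u} (d : α → α → ℝ) (ε : ℝ) (W : Set α) :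
    Cardinal.{u} :=
  sInf {κ | ∃ A : Set α, A ⊆ W ∧ IsDistinguishable d ε A ∧
    (∀ B : Set α, B ⊆ W → IsDistinguishable d ε B → A ⊆ B → A = B) ∧ #A = κ}

/-- There exists a maximal `ε`-distinguishable subset of `W` (Zorn). -/
lemma exists_maximal_distinguishable {X : Type u} [MetricSpace X] (W : Set X) (ε : ℝ) :
    ∃ A : Set X, A ⊆ W ∧ IsDistinguishable dist ε A ∧
      ∀ B : Set X, B ⊆ W → IsDistinguishable dist ε B → A ⊆ B → A = B := by
  have hz : ∀ c ⊆ {A : Set X | A ⊆ W ∧ IsDistinguishable dist ε A}, IsChain (· ⊆ ·) c →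
      ∃ ub ∈ {A : Set X | A ⊆ W ∧ IsDistinguishable dist ε A}, ∀ s ∈ c, s ⊆ ub := by
    intro c hcS hchain
    refine ⟨⋃₀ c, ⟨?_, ?_⟩, fun s hs => subset_sUnion_of_mem hs⟩
    · exact sUnion_subset fun s hs => (hcS hs).1
    · intro x hx y hy hxy
      obtain ⟨s, hs, hxs⟩ := hx
      obtain ⟨t, ht, hyt⟩ := hy
      rcases hchain.total hs ht with hst | hts
      · exact (hcS ht).2 x (hst hxs) y hyt hxy
      · exact (hcS hs).2 x hxs y (hts hyt) hxy
  obtain ⟨m, hm⟩ := zorn_subset _ hz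
  exact ⟨m, hm.prop.1, hm.prop.2, fun B hBW hBd hmB => hm.eq_of_subset ⟨hBW, hBd⟩ hmB⟩

/-- A maximal `ε`-distinguishable subset of `W` is an `ε`-net for `W`. -/
lemma isNet_of_maximal {X : Type u} [MetricSpace X] {W A : Set X} {ε : ℝ} (hε : 0 < ε)
    (hAW : A ⊆ W) (hAd : IsDistinguishable dist ε A)
    (hmax : ∀ B : Set X, B ⊆ W → IsDistinguishable dist ε B → A ⊆ B → A = B) :
    IsNet dist ε W A := by
  intro w hw
  by_contra hno
  push_neg at hno
  have hwA : w ∉ A := fun hwA => absurd (le_of_eq (dist_self w)) (not_le.2 (lt_of_lt_of_le hε (le_of_lt (hno w hwA))))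
  have hins : IsDistinguishable dist ε (insert w A) := by
    intro x hx y hy hxy
    rcases hx with hx | hx <;> rcases hy with hy | hy
    · exact absurd (hx.trans hy.symm) hxy
    · exact hx ▸ hno y hy
    · rw [dist_comm]; exact hy ▸ hno x hx
    · exact hAd x hx y hy hxy
  have := hmax (insert w A) (insert_subset hw hAW) hins (subset_insert w A)
  exact hwA (this ▸ mem_insert w A)

/-- Theorem 1.6, (i) ⇔ (ii): a metric space `X` is ultrametric if and only if for every
`W ⊆ X` and every `ε > 0` the equalities `M*_ε(W) = N̂ˣ_ε(W) = N̂_ε(W) = M̂_ε(W)` hold. -/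
theorem ultrametric_iff_covering_eq_packing {X : Type u} [MetricSpace X] :
    (∀ x y z : X, dist x z ≤ max (dist x y) (dist y z)) ↔
      ∀ (W : Set X) (ε : ℝ), 0 < ε →
        packingNumberSup dist ε W = coveringNumberIn dist ε Set.univ W ∧
        coveringNumberIn dist ε Set.univ W = coveringNumberIn dist ε W W ∧
        coveringNumberIn dist ε W W = maximalPackingInf dist ε W := by
  constructor
  · intro hu W ε hε
    obtain ⟨A₀, hA₀W, hA₀d, hA₀max⟩ := exists_maximal_distinguishable W ε
    have hA₀net : IsNet dist ε W A₀ := isNet_of_maximal hε hA₀W hA₀d hA₀max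
    -- key: any distinguishable set injects into any net
    have key : ∀ A C : Set X, A ⊆ W → IsDistinguishable dist ε A → IsNet dist ε W C →
        #A ≤ #C := by
      intro A C hAW hAd hC
      have hcf : ∀ a : A, ∃ c : C, dist (a : X) (c : X) ≤ ε := by
        rintro ⟨a, ha⟩
        obtain ⟨c, hc, hcd⟩ := hC a (hAW ha)
        exact ⟨⟨c, hc⟩, hcd⟩
      choose f hf using hcf
      refine Cardinal.mk_le_of_injective (f := f) fun a a' hff => ?_
      by_contra hne
      have hne' : (a : X) ≠ (a' : X) := fun h => hne (Subtype.ext h)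
      have h1 : ε < dist (a : X) (a' : X) := hAd a a.2 a' a'.2 hne'
      have h2 : dist (a : X) (a' : X) ≤ max (dist (a : X) (f a : X)) (dist (f a : X) (a' : X)) :=
        hu _ _ _
      have h3 : dist (f a : X) (a' : X) ≤ ε := by
        rw [dist_comm, hff]; exact hf a'
      exact absurd (h2.trans (max_le (hf a) h3)) (not_le.2 h1)
    -- names for the defining sets
    set Sp := {κ | ∃ A : Set X, A ⊆ W ∧ IsDistinguishable dist ε A ∧ #A = κ} with hSp
    set Sx := {κ | ∃ C : Set X, C ⊆ Set.univ ∧ IsNet dist ε W C ∧ #C = κ} with hSx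
    set Sw := {κ | ∃ C : Set X, C ⊆ W ∧ IsNet dist ε W C ∧ #C = κ} with hSw
    set Sm := {κ | ∃ A : Set X, A ⊆ W ∧ IsDistinguishable dist ε A ∧
      (∀ B : Set X, B ⊆ W → IsDistinguishable dist ε B → A ⊆ B → A = B) ∧ #A = κ} with hSm
    have hSmne : Sm.Nonempty := ⟨#A₀, A₀, hA₀W, hA₀d, hA₀max, rfl⟩
    have hSwne : Sw.Nonempty := ⟨#A₀, A₀, hA₀W, hA₀net, rfl⟩
    have hSxne : Sx.Nonempty := ⟨#A₀, A₀, subset_univ _, hA₀net, rfl⟩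
    have hSpne : Sp.Nonempty := ⟨#A₀, A₀, hA₀W, hA₀d, rfl⟩
    have hbdd : BddAbove Sp := ⟨#X, by rintro κ ⟨A, _, _, rfl⟩; exact Cardinal.mk_set_le A⟩
    -- inequalities
    have hx' : coveringNumberIn dist ε Set.univ W = sInf Sx := rfl
    have hw' : coveringNumberIn dist ε W W = sInf Sw := rfl
    have hm' : maximalPackingInf dist ε W = sInf Sm := rfl
    have hp' : packingNumberSup dist ε W = sSup Sp := rfl
    have i1 : packingNumberSup dist ε W ≤ coveringNumberIn dist ε Set.univ W := by
      rw [hx', hp']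
      obtain ⟨C, _, hCnet, hCc⟩ := csInf_mem hSxne
      refine csSup_le hSpne ?_
      rintro κ ⟨A, hAW, hAd, rfl⟩
      exact hCc ▸ key A C hAW hAd hCnet
    have i2 : coveringNumberIn dist ε Set.univ W ≤ coveringNumberIn dist ε W W :=
      hx' ▸ hw' ▸ csInf_le_csInf (OrderBot.bddBelow _) hSwne
        (by rintro κ ⟨C, hCW, hCnet, rfl⟩; exact ⟨C, subset_univ _, hCnet, rfl⟩)
    have i3 : coveringNumberIn dist ε W W ≤ maximalPackingInf dist ε W := by
      rw [hw', hm']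
      obtain ⟨A, hAW, hAd, hAmax, hAc⟩ := csInf_mem hSmne
      exact hAc ▸ csInf_le (OrderBot.bddBelow _) ⟨A, hAW, isNet_of_maximal hε hAW hAd hAmax, rfl⟩
    have i4 : maximalPackingInf dist ε W ≤ packingNumberSup dist ε W := by
      rw [hm', hp']
      obtain ⟨A, hAW, hAd, _, hAc⟩ := csInf_mem hSmne
      exact hAc ▸ le_csSup hbdd ⟨A, hAW, hAd, rfl⟩
    have e1 := le_antisymm i1 ((i2.trans i3).trans i4)
    have e2 := le_antisymm i2 (i3.trans (i4.trans i1))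
    have e3 := le_antisymm i3 (i4.trans (i1.trans i2))
    exact ⟨e1, e2, e3⟩
  · intro h x y z
    by_contra hc
    push_neg at hc
    set ε := max (dist x y) (dist y z) with hεdef
    have hε0 : 0 ≤ ε := le_trans dist_nonneg (le_max_left _ _)
    have hε : 0 < ε := by
      rcases hε0.lt_or_eq with h' | h'
      · exact h'
      · exfalso
        have hxy : x = y := dist_le_zero.1 (le_trans (le_max_left _ _) h'.symm.le)
        have hyz : y = z := dist_le_zero.1 (le_trans (le_max_right _ _) h'.symm.le)
        have hdz : dist x z = 0 := by rw [hxy, hyz, dist_self]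
        rw [hdz] at hc
        linarith
    obtain ⟨h1, -, -⟩ := h {x, z} ε hε
    have hxz : x ≠ z := by
      intro he
      rw [he, dist_self] at hc
      exact absurd hc (not_lt.2 hε.le)
    have h2 : (2 : Cardinal) ≤ packingNumberSup dist ε {x, z} := by
      refine le_csSup ⟨#X, ?_⟩ ?_
      · rintro κ ⟨A, _, _, rfl⟩; exact Cardinal.mk_set_le A
      · refine ⟨{x, z}, Subset.rfl, ?_, ?_⟩
        · intro a ha b hb hab
          rcases ha with ha | ha <;> rcases hb with hb | hb
          · exact absurd (ha.trans hb.symm) hab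
          · subst ha; subst hb; exact hc
          · subst ha; subst hb; rwa [dist_comm]
          · exact absurd (ha.trans hb.symm) hab
        · rw [Cardinal.mk_insert (by simpa using hxz), Cardinal.mk_singleton, one_add_one_eq_two]
    have h3 : coveringNumberIn dist ε Set.univ {x, z} ≤ 1 := by
      refine csInf_le (OrderBot.bddBelow _) ⟨{y}, subset_univ _, ?_, Cardinal.mk_singleton y⟩
      intro w hw
      rcases hw with hw | hw
      · subst hw
        exact ⟨y, rfl, by rw [hεdef]; exact le_max_left _ _⟩
      · rw [mem_singleton_iff] at hw
        subst hw
        exact ⟨y, rfl, by rw [dist_comm, hεdef]; exact le_max_right _ _⟩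
    rw [h1] at h2
    exact absurd (h2.trans h3) (by norm_num)
end

section
/- Let (X,d) be a metric space. Then X is ultrametric if and only if for every compact set W ⊆ X and every ε > 0 the equality N_ε(W) = M_ε(W) holds. -/
open Cardinal Set

universe u

/-- Theorem 1.6, (i) ⇔ (iii): a metric space `X` is ultrametric if and only if for every
compact `W ⊆ X` and every `ε > 0` the covering number equals the packing number. -/
theorem ultrametric_iff_compact_covering_eq_packing {X : Type u} [MetricSpace X] :
    (∀ x y z : X, dist x z ≤ max (dist x y) (dist y z)) ↔
      ∀ W : Set X, IsCompact W → ∀ ε : ℝ, 0 < ε →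
        coveringNumberIn dist ε W W = packingNumberSup dist ε W := by
  constructor
  · intro hu W _ ε hε
    set packSet : Set Cardinal.{u} :=
      {κ | ∃ A : Set X, A ⊆ W ∧ IsDistinguishable dist ε A ∧ #A = κ} with hpackSet
    set covSet : Set Cardinal.{u} :=
      {κ | ∃ C : Set X, C ⊆ W ∧ IsNet dist ε W C ∧ #C = κ} with hcovSet
    have hbdd : BddAbove packSet := by
      refine ⟨#X, ?_⟩
      rintro κ ⟨A, -, -, rfl⟩
      exact Cardinal.mk_set_le A
    -- any distinguishable set has cardinality at most any net
    have claimA : ∀ κ ∈ packSet, ∀ μ ∈ covSet, κ ≤ μ := by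
      rintro κ ⟨A, hAW, hAd, rfl⟩ μ ⟨C, hCW, hCnet, rfl⟩
      have hch : ∀ a : A, ∃ c : C, dist (a : X) (c : X) ≤ ε := by
        rintro ⟨a, ha⟩
        obtain ⟨c, hc, hdc⟩ := hCnet a (hAW ha)
        exact ⟨⟨c, hc⟩, hdc⟩
      choose f hf using hch
      refine Cardinal.mk_le_of_injective (f := f) ?_
      rintro ⟨a, ha⟩ ⟨b, hb⟩ hfe
      by_contra hne
      have hab : a ≠ b := fun h => hne (Subtype.ext h)
      have h1 := hf ⟨a, ha⟩
      have h2 := hf ⟨b, hb⟩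
      rw [hfe] at h1
      have : dist a b ≤ max (dist a (f ⟨b, hb⟩ : X)) (dist (f ⟨b, hb⟩ : X) b) := hu _ _ _
      have hle : dist a b ≤ ε := this.trans (max_le h1 (by rwa [dist_comm]))
      exact absurd hle (not_le.mpr (hAd a ha b hb hab))
    have hcovne : covSet.Nonempty :=
      ⟨#W, W, subset_rfl, fun w hw => ⟨w, hw, by simp [hε.le]⟩, rfl⟩
    have hpackne : packSet.Nonempty :=
      ⟨0, ∅, empty_subset _, fun x hx => absurd hx (notMem_empty x), Cardinal.mk_emptyCollection X⟩
    -- maximal distinguishable set via Zorn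
    have hzorn : ∀ c ⊆ {A : Set X | A ⊆ W ∧ IsDistinguishable dist ε A},
        IsChain (· ⊆ ·) c → ∃ ub ∈ {A : Set X | A ⊆ W ∧ IsDistinguishable dist ε A},
          ∀ s ∈ c, s ⊆ ub := by
      intro c hcS hchain
      refine ⟨⋃₀ c, ⟨?_, ?_⟩, fun s hs => subset_sUnion_of_mem hs⟩
      · exact sUnion_subset fun s hs => (hcS hs).1
      · rintro a ⟨s, hs, has⟩ b ⟨t, ht, hbt⟩ hab
        rcases hchain.total hs ht with hst | hts
        · exact (hcS ht).2 a (hst has) b hbt hab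
        · exact (hcS hs).2 a has b (hts hbt) hab
    obtain ⟨A, hAmax⟩ := zorn_subset {A : Set X | A ⊆ W ∧ IsDistinguishable dist ε A} hzorn
    obtain ⟨⟨hAW, hAd⟩, hmax⟩ := hAmax
    have hAnet : IsNet dist ε W A := by
      intro w hw
      by_contra hcon
      push_neg at hcon
      have hins : insert w A ∈ {A : Set X | A ⊆ W ∧ IsDistinguishable dist ε A} := by
        refine ⟨insert_subset hw hAW, ?_⟩
        rintro a (rfl | ha) b (rfl | hb) hab
        · exact absurd rfl hab
        · exact hcon b hb
        · rw [dist_comm]; exact hcon a ha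
        · exact hAd a ha b hb hab
      have := hmax hins (subset_insert w A)
      have hwA : w ∈ A := this (mem_insert w A)
      have := hcon w hwA
      simp at this
      linarith
    have hmemcov : #A ∈ covSet := ⟨A, hAW, hAnet, rfl⟩
    have hmempack : #A ∈ packSet := ⟨A, hAW, hAd, rfl⟩
    refine le_antisymm (csInf_le (OrderBot.bddBelow _) hmemcov |>.trans (le_csSup hbdd hmempack)) ?_
    exact csSup_le hpackne fun κ hκ => claimA κ hκ _ (csInf_mem hcovne)
  · intro h x y z
    by_contra hc
    push_neg at hc
    set ε := max (dist x y) (dist y z) with hεdef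
    have hε0 : 0 ≤ ε := le_max_of_le_left dist_nonneg
    have hxz : x ≠ z := by
      intro he
      rw [he, dist_self] at hc
      exact absurd hc (not_lt.mpr hε0)
    have hεpos : 0 < ε := by
      rcases hε0.lt_or_eq with h1 | h1
      · exact h1
      · exfalso
        have hxy : dist x y = 0 := le_antisymm (h1 ▸ le_max_left _ _) dist_nonneg
        have hyz : dist y z = 0 := le_antisymm (h1 ▸ le_max_right _ _) dist_nonneg
        have : x = z := (dist_eq_zero.mp hxy).trans (dist_eq_zero.mp hyz)
        exact hxz this
    have hW : IsCompact ({x, y, z} : Set X) := (Set.toFinite ({x, y, z} : Set X)).isCompact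
    have heq := h {x, y, z} hW ε hεpos
    have hcov : coveringNumberIn dist ε {x, y, z} {x, y, z} ≤ 1 := by
      apply csInf_le (OrderBot.bddBelow _)
      refine ⟨{y}, ?_, ?_, Cardinal.mk_singleton y⟩
      · simp
      · intro w hw
        rcases hw with h | h | h
        · exact ⟨y, rfl, by rw [h]; exact le_max_left _ _⟩
        · exact ⟨y, rfl, by rw [h]; simp [hε0]⟩
        · exact ⟨y, rfl, by rw [h, dist_comm]; exact le_max_right _ _⟩
    have hpack : 2 ≤ packingNumberSup dist ε {x, y, z} := by
      have hbdd : BddAbove {κ | ∃ A : Set X, A ⊆ ({x, y, z} : Set X) ∧ IsDistinguishable dist ε A ∧ #A = κ} := by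
        refine ⟨#X, ?_⟩
        rintro κ ⟨A, -, -, rfl⟩
        exact Cardinal.mk_set_le A
      apply le_csSup hbdd
      refine ⟨{x, z}, ?_, ?_, ?_⟩
      · intro w hw
        rcases hw with h | h <;> simp [h]
      · intro a ha b hb hab
        rcases ha with h1 | h1 <;> rcases hb with h2 | h2
        · exact absurd (h1.trans h2.symm) hab
        · rw [h1, h2]; exact hc
        · rw [h1, h2, dist_comm]; exact hc
        · exact absurd (h1.trans h2.symm) hab
      · rw [Cardinal.mk_insert (by simpa using hxz), Cardinal.mk_singleton]
        norm_num
    rw [heq] at hcov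
    exact absurd (hpack.trans hcov) (by norm_num)
end

section
/- Let (X,d_X) and (Y,d_Y) be nonempty metric spaces and let d be a partial distance-preserving metric on X × Y such that max{d_X(x₁,x₂), d_Y(y₁,y₂)} ≤ d((x₁,y₁),(x₂,y₂)) for all (x₁,y₁), (x₂,y₂) ∈ X × Y. Then d is an ultrametric if and only if d_X and d_Y are ultrametrics and d((x₁,y₁),(x₂,y₂)) = max{d_X(x₁,x₂), d_Y(y₁,y₂)} for all (x₁,y₁), (x₂,y₂) ∈ X × Y. -/
/-- `d` satisfies the ultra-triangle inequality. -/
def IsUltrametricOn {α : Type*} (d : α → α → ℝ) : Prop :=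
  ∀ x y z, d x z ≤ max (d x y) (d y z)

/-- `d` is a partial distance-preserving distance function on `X × Y`. -/
def PartialDistPreserving {X Y : Type*} [MetricSpace X] [MetricSpace Y]
    (d : X × Y → X × Y → ℝ) : Prop :=
  (∀ (x₁ x₂ : X) (y : Y), d (x₁, y) (x₂, y) = dist x₁ x₂) ∧
    (∀ (x : X) (y₁ y₂ : Y), d (x, y₁) (x, y₂) = dist y₁ y₂)

/-- `d` is a distance-increasing distance function on `X × Y`. -/
def DistanceIncreasing {X Y : Type*} [MetricSpace X] [MetricSpace Y]
    (d : X × Y → X × Y → ℝ) : Prop :=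
  ∀ (x₁ x₂ x₃ x₄ : X) (y₁ y₂ y₃ y₄ : Y),
    dist x₁ x₂ ≤ dist x₃ x₄ → dist y₁ y₂ ≤ dist y₃ y₄ →
      d (x₁, y₁) (x₂, y₂) ≤ d (x₃, y₃) (x₄, y₄)

/-- Theorem 2.8: if `d` is a partial distance-preserving metric on `X × Y` with `d_∞ ≤ d`,
then `d` is an ultrametric iff `d_X` and `d_Y` are ultrametrics and `d = d_∞`. -/
theorem ultrametric_iff_max_of_pdp {X Y : Type*} [MetricSpace X] [MetricSpace Y]
    [Nonempty X] [Nonempty Y] (d : X × Y → X × Y → ℝ) (hmetric : IsMetricOn d)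
    (hpdp : PartialDistPreserving d)
    (hlow : ∀ p q : X × Y, max (dist p.1 q.1) (dist p.2 q.2) ≤ d p q) :
    IsUltrametricOn d ↔
      ((∀ x y z : X, dist x z ≤ max (dist x y) (dist y z)) ∧
       (∀ x y z : Y, dist x z ≤ max (dist x y) (dist y z)) ∧
       ∀ p q : X × Y, d p q = max (dist p.1 q.1) (dist p.2 q.2)) := by
  obtain ⟨hX, hY⟩ := hpdp
  constructor
  · intro hu
    refine ⟨?_, ?_, ?_⟩
    · intro x y z
      obtain ⟨y0⟩ := ‹Nonempty Y›
      have := hu (x, y0) (y, y0) (z, y0)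
      rwa [hX, hX, hX] at this
    · intro x y z
      obtain ⟨x0⟩ := ‹Nonempty X›
      have := hu (x0, x) (x0, y) (x0, z)
      rwa [hY, hY, hY] at this
    · intro p q
      refine le_antisymm ?_ (hlow p q)
      have := hu (p.1, p.2) (q.1, p.2) (q.1, q.2)
      rwa [hX, hY] at this
  · rintro ⟨hXu, hYu, heq⟩ p q r
    rw [heq, heq, heq]
    have h1 : dist p.1 r.1 ≤ max (dist p.1 q.1) (dist q.1 r.1) := hXu _ _ _
    have h2 : dist p.2 r.2 ≤ max (dist p.2 q.2) (dist q.2 r.2) := hYu _ _ _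
    exact max_le
      (h1.trans (max_le_max (le_max_left _ _) (le_max_left _ _)))
      (h2.trans (max_le_max (le_max_right _ _) (le_max_right _ _)))
end

section
/- Let (X,d_X) and (Y,d_Y) be nonempty metric spaces and let d be a distance-increasing and partial distance-preserving metric on the product X × Y. Then d is an ultrametric if and only if d_X and d_Y are ultrametrics and d((x₁,y₁),(x₂,y₂)) = max{d_X(x₁,x₂), d_Y(y₁,y₂)} for all (x₁,y₁), (x₂,y₂) ∈ X × Y. -/
/-- Corollary 2.9: if `d` is a distance-increasing, partial distance-preserving metric on
`X × Y`, then `d` is an ultrametric iff `d_X` and `d_Y` are ultrametrics and `d = d_∞`. -/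
theorem ultrametric_iff_max_of_distanceIncreasing {X Y : Type*} [MetricSpace X]
    [MetricSpace Y] [Nonempty X] [Nonempty Y] (d : X × Y → X × Y → ℝ)
    (hmetric : IsMetricOn d) (hinc : DistanceIncreasing d) (hpdp : PartialDistPreserving d) :
    IsUltrametricOn d ↔
      ((∀ x y z : X, dist x z ≤ max (dist x y) (dist y z)) ∧
       (∀ x y z : Y, dist x z ≤ max (dist x y) (dist y z)) ∧
       ∀ p q : X × Y, d p q = max (dist p.1 q.1) (dist p.2 q.2)) := by
  obtain ⟨hX, hY⟩ := hpdp
  constructor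
  · intro hu
    have hge : ∀ p q : X × Y, max (dist p.1 q.1) (dist p.2 q.2) ≤ d p q := by
      rintro ⟨x₁, y₁⟩ ⟨x₂, y₂⟩
      apply max_le
      · have := hinc x₁ x₂ x₁ x₂ y₁ y₁ y₁ y₂ le_rfl (by simp [dist_nonneg])
        rwa [hX x₁ x₂ y₁] at this
      · have := hinc x₁ x₁ x₁ x₂ y₁ y₂ y₁ y₂ (by simp [dist_nonneg]) le_rfl
        rwa [hY x₁ y₁ y₂] at this
    have hle : ∀ p q : X × Y, d p q ≤ max (dist p.1 q.1) (dist p.2 q.2) := by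
      rintro ⟨x₁, y₁⟩ ⟨x₂, y₂⟩
      have := hu (x₁, y₁) (x₂, y₁) (x₂, y₂)
      rwa [hX x₁ x₂ y₁, hY x₂ y₁ y₂] at this
    refine ⟨?_, ?_, fun p q => le_antisymm (hle p q) (hge p q)⟩
    · intro x y z
      obtain ⟨y₀⟩ := ‹Nonempty Y›
      have := hu (x, y₀) (y, y₀) (z, y₀)
      rwa [hX x z y₀, hX x y y₀, hX y z y₀] at this
    · intro x y z
      obtain ⟨x₀⟩ := ‹Nonempty X›
      have := hu (x₀, x) (x₀, y) (x₀, z)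
      rwa [hY x₀ x z, hY x₀ x y, hY x₀ y z] at this
  · rintro ⟨huX, huY, heq⟩
    rintro ⟨x₁, y₁⟩ ⟨x₂, y₂⟩ ⟨x₃, y₃⟩
    simp only [heq]
    apply max_le
    · exact le_trans (huX x₁ x₂ x₃) (max_le_max (le_max_left _ _) (le_max_left _ _))
    · exact le_trans (huY y₁ y₂ y₃) (max_le_max (le_max_right _ _) (le_max_right _ _))
end

section
/- Let (X,d_X) and (Y,d_Y) be nonempty ultrametric spaces and let d be a partial distance-preserving metric on X × Y such that max{d_X(x₁,x₂), d_Y(y₁,y₂)} ≤ d((x₁,y₁),(x₂,y₂)) for all (x₁,y₁), (x₂,y₂) ∈ X × Y. Then d is an ultrametric if and only if for all compact sets W ⊆ X, Z ⊆ Y and every ε > 0 the equality M_ε(W × Z) = M_ε(W) · M_ε(Z) holds, where the packing number on W × Z is computed with respect to the metric d. -/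
open Cardinal Set

universe u

lemma packing_eq_quotient {α : Type u} (ρ : α → α → ℝ) (ε : ℝ) (S : Set α) (s : Setoid ↥S)
    (h : ∀ u v : ↥S, s.r u v ↔ ρ (u : α) v ≤ ε) :
    packingNumberSup ρ ε S = #(Quotient s) := by
  classical
  have hmemQ : #(Quotient s) ∈ {κ | ∃ A : Set α, A ⊆ S ∧ IsDistinguishable ρ ε A ∧ #A = κ} := by
    have hinj : Function.Injective (fun q : Quotient s => ((q.out : ↥S) : α)) := by
      intro q₁ q₂ hq
      have h1 : (q₁.out : ↥S) = q₂.out := Subtype.ext hq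
      rw [← Quotient.out_eq q₁, ← Quotient.out_eq q₂, h1]
    refine ⟨Set.range (fun q : Quotient s => ((q.out : ↥S) : α)), ?_, ?_, ?_⟩
    · rintro _ ⟨q, rfl⟩; exact (q.out : ↥S).2
    · rintro _ ⟨q₁, rfl⟩ _ ⟨q₂, rfl⟩ hne
      by_contra hle
      push_neg at hle
      have heq : q₁ = q₂ := by
        rw [← Quotient.out_eq q₁, ← Quotient.out_eq q₂]
        exact Quotient.sound ((h _ _).2 hle)
      exact hne (by rw [heq])
    · exact Cardinal.mk_range_eq _ hinj
  have hub : ∀ κ ∈ {κ | ∃ A : Set α, A ⊆ S ∧ IsDistinguishable ρ ε A ∧ #A = κ},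
      κ ≤ #(Quotient s) := by
    rintro κ ⟨A, hAS, hA, rfl⟩
    have hinj : Function.Injective
        (fun a : ↥A => (Quotient.mk s ⟨(a : α), hAS a.2⟩ : Quotient s)) := by
      intro a b hab
      have hle := (h _ _).1 (Quotient.exact hab)
      by_contra hne
      have hne' : (a : α) ≠ b := fun hh => hne (Subtype.ext hh)
      exact absurd hle (not_le.2 (hA a a.2 b b.2 hne'))
    exact Cardinal.mk_le_of_injective hinj
  exact le_antisymm (csSup_le ⟨_, hmemQ⟩ hub) (le_csSup ⟨_, hub⟩ hmemQ)

/-- Theorem 3.1: for ultrametric spaces `X`, `Y` and a partial distance-preserving metric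
`d ≥ d_∞` on `X × Y`, `d` is an ultrametric iff the packing numbers are multiplicative:
`M_ε(W × Z) = M_ε(W) · M_ε(Z)` for all compact `W ⊆ X`, `Z ⊆ Y` and all `ε > 0`. -/
theorem ultrametric_iff_packing_multiplicative {X Y : Type u} [MetricSpace X] [MetricSpace Y]
    [Nonempty X] [Nonempty Y]
    (hX : ∀ x y z : X, dist x z ≤ max (dist x y) (dist y z))
    (hY : ∀ x y z : Y, dist x z ≤ max (dist x y) (dist y z))
    (d : X × Y → X × Y → ℝ) (hmetric : IsMetricOn d) (hpdp : PartialDistPreserving d)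
    (hlow : ∀ p q : X × Y, max (dist p.1 q.1) (dist p.2 q.2) ≤ d p q) :
    IsUltrametricOn d ↔
      ∀ (W : Set X) (Z : Set Y), IsCompact W → IsCompact Z → ∀ ε : ℝ, 0 < ε →
        packingNumberSup d ε (W ×ˢ Z) =
          packingNumberSup dist ε W * packingNumberSup dist ε Z := by
  have hdself : ∀ p : X × Y, d p p = 0 := hmetric.1
  constructor
  · intro hult W Z _ _ ε hε
    -- under ultrametricity, d equals the max metric
    have hdmax : ∀ p q : X × Y, d p q = max (dist p.1 q.1) (dist p.2 q.2) := by
      rintro ⟨x₁, y₁⟩ ⟨x₂, y₂⟩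
      refine le_antisymm ?_ (hlow _ _)
      have := hult (x₁, y₁) (x₂, y₁) (x₂, y₂)
      rwa [hpdp.1 x₁ x₂ y₁, hpdp.2 x₂ y₁ y₂] at this
    -- setoids
    have hεnn : (0:ℝ) ≤ ε := le_of_lt hε
    let sW : Setoid ↥W :=
      ⟨fun u v => dist (u : X) v ≤ ε,
        fun u => by simp [hεnn],
        fun {u v} huv => by rwa [dist_comm],
        fun {u v w} h1 h2 => le_trans (hX u v w) (max_le h1 h2)⟩
    let sZ : Setoid ↥Z :=
      ⟨fun u v => dist (u : Y) v ≤ ε,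
        fun u => by simp [hεnn],
        fun {u v} huv => by rwa [dist_comm],
        fun {u v w} h1 h2 => le_trans (hY u v w) (max_le h1 h2)⟩
    let sP : Setoid ↥(W ×ˢ Z) :=
      ⟨fun u v => d u v ≤ ε,
        fun u => by simp [hdself, hεnn],
        fun {u v} huv => by rwa [hmetric.2.2.1],
        fun {u v w} h1 h2 => le_trans (hult u v w) (max_le h1 h2)⟩
    have e1 : Quotient sP ≃ Quotient (sW.prod sZ) := by
      refine Quotient.congr (Equiv.Set.prod W Z) ?_
      rintro ⟨⟨x₁, y₁⟩, hu⟩ ⟨⟨x₂, y₂⟩, hv⟩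
      show d (x₁, y₁) (x₂, y₂) ≤ ε ↔ dist x₁ x₂ ≤ ε ∧ dist y₁ y₂ ≤ ε
      rw [hdmax (x₁, y₁) (x₂, y₂)]
      exact max_le_iff
    have e2 : Quotient (sW.prod sZ) ≃ Quotient sW × Quotient sZ :=
      (Setoid.prodQuotientEquiv sW sZ).symm
    rw [packing_eq_quotient d ε (W ×ˢ Z) sP (fun u v => Iff.rfl),
      packing_eq_quotient dist ε W sW (fun u v => Iff.rfl),
      packing_eq_quotient dist ε Z sZ (fun u v => Iff.rfl),
      Cardinal.mk_congr (e1.trans e2), Cardinal.mk_prod, Cardinal.lift_id, Cardinal.lift_id]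
  · intro hmul
    -- it suffices to show d ≤ max
    have hle : ∀ p q : X × Y, d p q ≤ max (dist p.1 q.1) (dist p.2 q.2) := by
      rintro ⟨x₁, y₁⟩ ⟨x₂, y₂⟩
      by_contra hgt
      push_neg at hgt
      set a := dist x₁ x₂ with ha
      set b := dist y₁ y₂ with hb
      set ε := max a b with hεdef
      have hε : 0 < ε := by
        rcases lt_or_ge 0 ε with h | h
        · exact h
        · exfalso
          have ha0 : a = 0 := le_antisymm (le_trans (le_max_left a b) h) dist_nonneg
          have hb0 : b = 0 := le_antisymm (le_trans (le_max_right a b) h) dist_nonneg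
          have hx12 : x₁ = x₂ := dist_eq_zero.1 ha0
          have hy12 : y₁ = y₂ := dist_eq_zero.1 hb0
          rw [hx12, hy12, hdself] at hgt
          have : (0:ℝ) ≤ ε := le_trans dist_nonneg (le_max_left a b)
          linarith
      have hWc : IsCompact ({x₁, x₂} : Set X) := ((Set.finite_singleton _).insert _).isCompact
      have hZc : IsCompact ({y₁, y₂} : Set Y) := ((Set.finite_singleton _).insert _).isCompact
      have key := hmul {x₁, x₂} {y₁, y₂} hWc hZc ε hε
      -- RHS factors equal 1
      have hone : ∀ {γ : Type u} [MetricSpace γ] (z₁ z₂ : γ), dist z₁ z₂ ≤ ε →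
          packingNumberSup dist ε ({z₁, z₂} : Set γ) = 1 := by
        intro γ _ z₁ z₂ hzd
        have hub : ∀ κ ∈ {κ | ∃ A : Set γ, A ⊆ ({z₁, z₂} : Set γ) ∧
            IsDistinguishable dist ε A ∧ #A = κ}, κ ≤ 1 := by
          rintro κ ⟨A, hAS, hA, rfl⟩
          rw [Cardinal.le_one_iff_subsingleton]
          constructor
          intro u v
          apply Subtype.ext
          by_contra hne
          have h1 := hA u u.2 v v.2 hne
          have hd : dist (u : γ) v ≤ ε := by
            rcases hAS u.2 with hu | hu <;> rcases hAS v.2 with hv | hv <;>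
              simp -failIfUnchanged only [Set.mem_singleton_iff] at * <;>
              rw [hu, hv] <;>
              simp [hzd, le_of_lt hε, dist_comm z₂ z₁, hzd]
          exact absurd hd (not_le.2 h1)
        have hmem : (1 : Cardinal) ∈ {κ | ∃ A : Set γ, A ⊆ ({z₁, z₂} : Set γ) ∧
            IsDistinguishable dist ε A ∧ #A = κ} :=
          ⟨{z₁}, by simp, fun x hx y hy hxy => absurd (by
            rw [Set.mem_singleton_iff] at hx hy; rw [hx, hy]) hxy, Cardinal.mk_singleton _⟩
        exact le_antisymm (csSup_le ⟨_, hmem⟩ hub) (le_csSup ⟨_, hub⟩ hmem)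
      have hane : (x₁, y₁) ≠ (x₂, y₂) := by
        intro hcontra
        rw [hcontra, hdself] at hgt
        linarith
      -- but d (x₁,y₁) (x₂,y₂) > ε, hence product packing ≥ 2
      have hmem2 : (2 : Cardinal) ∈ {κ | ∃ A : Set (X × Y),
          A ⊆ (({x₁, x₂} : Set X) ×ˢ ({y₁, y₂} : Set Y)) ∧ IsDistinguishable d ε A ∧ #A = κ} := by
        refine ⟨{(x₁, y₁), (x₂, y₂)}, ?_, ?_, ?_⟩
        · rintro p hp
          rcases hp with hp | hp <;> simp_all [Set.mem_prod]
        · intro p hp q hq hpq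
          have hsymm := hmetric.2.2.1
          rcases hp with hp | hp <;> rcases hq with hq | hq <;>
            simp -failIfUnchanged only [Set.mem_singleton_iff] at * <;> subst hp <;> subst hq
          · exact absurd rfl hpq
          · exact hgt
          · rw [hsymm]; exact hgt
          · exact absurd rfl hpq
        · rw [Cardinal.mk_insert (by simpa using hane), Cardinal.mk_singleton]
          norm_num
      have hbdd : BddAbove {κ | ∃ A : Set (X × Y),
          A ⊆ (({x₁, x₂} : Set X) ×ˢ ({y₁, y₂} : Set Y)) ∧ IsDistinguishable d ε A ∧ #A = κ} := by
        refine ⟨#(X × Y), ?_⟩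
        rintro κ ⟨A, _, _, rfl⟩
        exact Cardinal.mk_set_le A
      have h2le : (2 : Cardinal) ≤ packingNumberSup d ε (({x₁, x₂} : Set X) ×ˢ ({y₁, y₂} : Set Y)) :=
        le_csSup hbdd hmem2
      rw [key, hone x₁ x₂ (le_max_left a b), hone y₁ y₂ (le_max_right a b), mul_one] at h2le
      norm_num at h2le
    rintro p q r
    calc d p r ≤ max (dist p.1 r.1) (dist p.2 r.2) := hle p r
      _ ≤ max (max (dist p.1 q.1) (dist q.1 r.1)) (max (dist p.2 q.2) (dist q.2 r.2)) :=
          max_le_max (hX _ _ _) (hY _ _ _)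
      _ ≤ max (d p q) (d q r) := by
          apply max_le <;> apply max_le
          · exact le_trans (le_max_left _ _) (le_trans (hlow p q) (le_max_left _ _))
          · exact le_trans (le_max_left _ _) (le_trans (hlow q r) (le_max_right _ _))
          · exact le_trans (le_max_right _ _) (le_trans (hlow p q) (le_max_left _ _))
          · exact le_trans (le_max_right _ _) (le_trans (hlow q r) (le_max_right _ _))
end

section
/- Let (X,d_X), (Y,d_Y) be ultrametric spaces and let d be a partial distance-preserving ultrametric on X × Y with max{d_X(x₁,x₂), d_Y(y₁,y₂)} ≤ d((x₁,y₁),(x₂,y₂)) for all (x₁,y₁), (x₂,y₂) ∈ X × Y. Then for all compact sets W ⊆ X, Z ⊆ Y and every ε > 0 the equalities M_ε(W × Z) = M_ε(W) · M_ε(Z), N_ε(W × Z) = N_ε(W) · N_ε(Z) and M_ε(W × Z) = N_ε(W × Z) hold, where the quantities on W × Z are computed with respect to the metric d. -/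
open Cardinal Set

universe u

section Aux

variable {α : Type u}

lemma net_card_le (d : α → α → ℝ) (ε : ℝ)
    (hsymm : ∀ x y, d x y = d y x)
    (hultra : ∀ x y z, d x z ≤ max (d x y) (d y z))
    {W A C : Set α} (hA : A ⊆ W) (hAd : IsDistinguishable d ε A)
    (hC : IsNet d ε W C) : #A ≤ #C := by
  have h : ∀ a : A, ∃ c : C, d a c ≤ ε := by
    intro a
    obtain ⟨c, hc, hdc⟩ := hC a (hA a.2)
    exact ⟨⟨c, hc⟩, hdc⟩
  choose f hf using h
  refine Cardinal.mk_le_of_injective (f := f) ?_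
  intro a b hab
  by_contra hne
  have hne' : (a : α) ≠ b := fun h => hne (Subtype.ext h)
  have h1 := hAd a a.2 b b.2 hne'
  have h2 : d (a : α) b ≤ max (d a (f a)) (d (f a) (b : α)) := hultra _ _ _
  have h3 : d (f a) (b : α) ≤ ε := by
    rw [hab, hsymm]; exact hf b
  have h4 : d (a : α) b ≤ ε := h2.trans (max_le (hf a) h3)
  exact absurd h4 (not_le.mpr h1)

lemma pack_cover_eq (d : α → α → ℝ) (ε : ℝ)
    (hsymm : ∀ x y, d x y = d y x)
    (hultra : ∀ x y z, d x z ≤ max (d x y) (d y z))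
    {W A : Set α} (hA : A ⊆ W) (hAd : IsDistinguishable d ε A) (hAn : IsNet d ε W A) :
    packingNumberSup d ε W = #A ∧ coveringNumberIn d ε W W = #A := by
  constructor
  · refine le_antisymm (csSup_le ⟨#A, A, hA, hAd, rfl⟩ ?_) (le_csSup ?_ ⟨A, hA, hAd, rfl⟩)
    · rintro κ ⟨B, hB, hBd, rfl⟩
      exact net_card_le d ε hsymm hultra hB hBd hAn
    · refine ⟨#A, ?_⟩
      rintro κ ⟨B, hB, hBd, rfl⟩
      exact net_card_le d ε hsymm hultra hB hBd hAn
  · refine le_antisymm (csInf_le (OrderBot.bddBelow _) ⟨A, hA, hAn, rfl⟩)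
      (le_csInf ⟨#A, A, hA, hAn, rfl⟩ ?_)
    rintro κ ⟨C, _, hCn, rfl⟩
    exact net_card_le d ε hsymm hultra hA hAd hCn

lemma exists_max_net (d : α → α → ℝ) (ε : ℝ) (hε : 0 < ε)
    (hrefl : ∀ x, d x x = 0) (hsymm : ∀ x y, d x y = d y x)
    (W : Set α) :
    ∃ A : Set α, A ⊆ W ∧ IsDistinguishable d ε A ∧ IsNet d ε W A := by
  have hchain : ∀ c ⊆ {A : Set α | A ⊆ W ∧ IsDistinguishable d ε A},
      IsChain (· ⊆ ·) c → ∃ ub ∈ {A : Set α | A ⊆ W ∧ IsDistinguishable d ε A},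
        ∀ s ∈ c, s ⊆ ub := by
    intro c hcS hc
    refine ⟨⋃₀ c, ⟨?_, ?_⟩, fun s hs => Set.subset_sUnion_of_mem hs⟩
    · exact Set.sUnion_subset fun s hs => (hcS hs).1
    · rintro x hx y hy hxy
      obtain ⟨s, hs, hxs⟩ := hx
      obtain ⟨t, ht, hyt⟩ := hy
      rcases hc.total hs ht with hst | hst
      · exact (hcS ht).2 x (hst hxs) y hyt hxy
      · exact (hcS hs).2 x hxs y (hst hyt) hxy
  obtain ⟨A, hAmax⟩ := zorn_subset {A | A ⊆ W ∧ IsDistinguishable d ε A} hchain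
  obtain hAS := hAmax.1
  refine ⟨A, hAS.1, hAS.2, ?_⟩
  · skip
    intro w hw
    by_contra hcon
    push_neg at hcon
    have hmem : A ∪ {w} ∈ {A | A ⊆ W ∧ IsDistinguishable d ε A} := by
      constructor
      · exact Set.union_subset hAS.1 (by simpa using hw)
      · rintro x (hx | hx) y (hy | hy) hxy
        · exact hAS.2 x hx y hy hxy
        · rw [Set.mem_singleton_iff] at hy; subst hy
          rw [hsymm]; exact hcon x hx
        · rw [Set.mem_singleton_iff] at hx; subst hx
          exact hcon y hy
        · rw [Set.mem_singleton_iff] at hx hy; subst hx; subst hy; exact absurd rfl hxy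
    have : A ∪ {w} ⊆ A := hAmax.2 hmem Set.subset_union_left
    have hwA : w ∈ A := this (by simp)
    have h0 := hcon w hwA
    rw [hrefl] at h0
    exact absurd h0 (not_lt.mpr hε.le)

end Aux


/-- Lemma 3.2 (section 4): if `X`, `Y` are ultrametric spaces and `d` is a partial
distance-preserving ultrametric on `X × Y` with `d_∞ ≤ d`, then for all compact `W ⊆ X`,
`Z ⊆ Y` and all `ε > 0`: `M_ε(W × Z) = M_ε(W)·M_ε(Z)`, `N_ε(W × Z) = N_ε(W)·N_ε(Z)` and
`M_ε(W × Z) = N_ε(W × Z)`. -/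
theorem packing_covering_multiplicative_of_ultrametric {X Y : Type u} [MetricSpace X]
    [MetricSpace Y]
    (hX : ∀ x y z : X, dist x z ≤ max (dist x y) (dist y z))
    (hY : ∀ x y z : Y, dist x z ≤ max (dist x y) (dist y z))
    (d : X × Y → X × Y → ℝ) (hmetric : IsMetricOn d) (hultra : IsUltrametricOn d)
    (hpdp : PartialDistPreserving d)
    (hlow : ∀ p q : X × Y, max (dist p.1 q.1) (dist p.2 q.2) ≤ d p q)
    (W : Set X) (Z : Set Y) (hW : IsCompact W) (hZ : IsCompact Z) (ε : ℝ) (hε : 0 < ε) :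
    packingNumberSup d ε (W ×ˢ Z) = packingNumberSup dist ε W * packingNumberSup dist ε Z ∧
      coveringNumberIn d ε (W ×ˢ Z) (W ×ˢ Z) =
        coveringNumberIn dist ε W W * coveringNumberIn dist ε Z Z ∧
      packingNumberSup d ε (W ×ˢ Z) = coveringNumberIn d ε (W ×ˢ Z) (W ×ˢ Z) := by
  classical
  have hd : ∀ p q : X × Y, d p q = max (dist p.1 q.1) (dist p.2 q.2) := by
    rintro ⟨x1, y1⟩ ⟨x2, y2⟩
    refine le_antisymm ?_ (hlow _ _)
    have h := hultra (x1, y1) (x2, y1) (x2, y2)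
    rw [hpdp.1, hpdp.2] at h
    exact h
  obtain ⟨A, hAW, hAd, hAn⟩ := exists_max_net dist ε hε dist_self dist_comm W
  obtain ⟨B, hBZ, hBd, hBn⟩ := exists_max_net dist ε hε dist_self dist_comm Z
  have hABsub : A ×ˢ B ⊆ W ×ˢ Z := Set.prod_mono hAW hBZ
  have hABd : IsDistinguishable d ε (A ×ˢ B) := by
    rintro ⟨a1, b1⟩ ⟨ha1, hb1⟩ ⟨a2, b2⟩ ⟨ha2, hb2⟩ hne
    rw [hd]
    rcases not_and_or.mp (fun h => hne (Prod.ext h.1 h.2)) with h | h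
    · exact lt_of_lt_of_le (hAd a1 ha1 a2 ha2 h) (le_max_left _ _)
    · exact lt_of_lt_of_le (hBd b1 hb1 b2 hb2 h) (le_max_right _ _)
  have hABn : IsNet d ε (W ×ˢ Z) (A ×ˢ B) := by
    rintro ⟨w, z⟩ ⟨hw, hz⟩
    obtain ⟨a, ha, hda⟩ := hAn w hw
    obtain ⟨b, hb, hdb⟩ := hBn z hz
    exact ⟨(a, b), ⟨ha, hb⟩, by rw [hd]; exact max_le hda hdb⟩
  obtain ⟨hP, hC⟩ := pack_cover_eq d ε hmetric.2.2.1 hultra hABsub hABd hABn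
  obtain ⟨hPW, hCW⟩ := pack_cover_eq dist ε dist_comm hX hAW hAd hAn
  obtain ⟨hPZ, hCZ⟩ := pack_cover_eq dist ε dist_comm hY hBZ hBd hBn
  have hcard : #(↥(A ×ˢ B)) = #A * #B := by
    rw [Cardinal.mk_congr (Equiv.Set.prod A B), Cardinal.mk_prod,
      Cardinal.lift_id, Cardinal.lift_id]
  refine ⟨?_, ?_, ?_⟩
  · rw [hP, hPW, hPZ, hcard]
  · rw [hC, hCW, hCZ, hcard]
  · rw [hP, hC]
end

section
/- Let (X,d_X) and (Y,d_Y) be nonempty metric spaces and let d be a partial distance-preserving metric on X × Y such that max{d_X(x₁,x₂), d_Y(y₁,y₂)} ≤ d((x₁,y₁),(x₂,y₂)) for all (x₁,y₁), (x₂,y₂) ∈ X × Y. Then (X × Y, d) is an ultrametric space if and only if for all compact sets W ⊆ X, Z ⊆ Y and every ε > 0 the equalities N_ε(W × Z) = M_ε(W × Z) and M_ε(W × Z) = M_ε(W) · M_ε(Z) hold, where the quantities on W × Z are computed with respect to the metric d. -/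
open Cardinal Set

universe u

section Aux

variable {α : Type u} [MetricSpace α]

lemma exists_disting_net {ε : ℝ} (hε : 0 < ε) (K : Set α) :
    ∃ T, T ⊆ K ∧ IsDistinguishable dist ε T ∧ IsNet dist ε K T := by
  have hzorn : ∀ c ⊆ {A : Set α | A ⊆ K ∧ IsDistinguishable dist ε A},
      IsChain (· ⊆ ·) c → ∃ ub ∈ {A : Set α | A ⊆ K ∧ IsDistinguishable dist ε A},
        ∀ s ∈ c, s ⊆ ub := by
    intro c hc hchain
    refine ⟨⋃₀ c, ⟨sUnion_subset fun s hs => (hc hs).1, ?_⟩, fun s hs => subset_sUnion_of_mem hs⟩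
    rintro x ⟨s, hs, hx⟩ y ⟨s', hs', hy⟩ hxy
    rcases hchain.total hs hs' with hss | hss
    · exact (hc hs').2 x (hss hx) y hy hxy
    · exact (hc hs).2 x hx y (hss hy) hxy
  obtain ⟨T, hTmax⟩ := zorn_subset {A : Set α | A ⊆ K ∧ IsDistinguishable dist ε A} hzorn
  obtain ⟨hTK, hTd⟩ := hTmax.1
  refine ⟨T, hTK, hTd, ?_⟩
  intro w hw
  by_contra hcon
  push_neg at hcon
  have hwT : w ∉ T := fun hwT => absurd (hcon w hwT) (by simp [hε.le])
  have hmem : insert w T ∈ {A : Set α | A ⊆ K ∧ IsDistinguishable dist ε A} := by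
    refine ⟨insert_subset hw hTK, ?_⟩
    rintro u hu v hv huv
    rcases mem_insert_iff.mp hu with h1 | h1
    · subst h1
      rcases mem_insert_iff.mp hv with h2 | h2
      · exact absurd h2.symm huv
      · exact hcon v h2
    · rcases mem_insert_iff.mp hv with h2 | h2
      · subst h2
        rw [dist_comm]; exact hcon u h1
      · exact hTd u h1 v h2 huv
  have : w ∈ T := hTmax.2 hmem (subset_insert w T) (mem_insert w T)
  exact hwT this

lemma key_lemma {ε : ℝ}
    (hu : ∀ a b c : α, dist a c ≤ max (dist a b) (dist b c))
    {K T : Set α} (hTK : T ⊆ K) (hTd : IsDistinguishable dist ε T)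
    (hTn : IsNet dist ε K T) :
    coveringNumberIn dist ε K K = #T ∧ packingNumberSup dist ε K = #T := by
  constructor
  · apply IsLeast.csInf_eq
    constructor
    · exact ⟨T, hTK, hTn, rfl⟩
    · rintro κ ⟨C, hCK, hCn, rfl⟩
      choose f hf1 hf2 using fun t : T => hCn t (hTK t.2)
      refine Cardinal.mk_le_of_injective (f := fun t => (⟨f t, hf1 t⟩ : C)) ?_
      intro t t' h
      have hc : f t = f t' := congrArg Subtype.val h
      by_contra hne
      have hne' : (t : α) ≠ (t' : α) := fun he => hne (Subtype.ext he)
      have h1 : ε < dist (t : α) t' := hTd t t.2 t' t'.2 hne'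
      have h2 : dist (t : α) t' ≤ ε :=
        (hu (t : α) (f t) t').trans
          (max_le (hf2 t) (by rw [dist_comm, hc]; exact hf2 t'))
      linarith
  · apply IsGreatest.csSup_eq
    constructor
    · exact ⟨T, hTK, hTd, rfl⟩
    · rintro κ ⟨A, hAK, hAd, rfl⟩
      choose g hg1 hg2 using fun a : A => hTn a (hAK a.2)
      refine Cardinal.mk_le_of_injective (f := fun a => (⟨g a, hg1 a⟩ : T)) ?_
      intro a a' h
      have hc : g a = g a' := congrArg Subtype.val h
      by_contra hne
      have hne' : (a : α) ≠ (a' : α) := fun he => hne (Subtype.ext he)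
      have h1 : ε < dist (a : α) a' := hAd a a.2 a' a'.2 hne'
      have h2 : dist (a : α) a' ≤ ε :=
        (hu (a : α) (g a) a').trans
          (max_le (hg2 a) (by rw [dist_comm, hc]; exact hg2 a'))
      linarith

end Aux

lemma prod_ultra {X Y : Type*} [MetricSpace X] [MetricSpace Y]
    (hX : ∀ a b c : X, dist a c ≤ max (dist a b) (dist b c))
    (hY : ∀ a b c : Y, dist a c ≤ max (dist a b) (dist b c))
    (p q r : X × Y) : dist p r ≤ max (dist p q) (dist q r) := by
  rw [Prod.dist_eq, Prod.dist_eq, Prod.dist_eq]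
  refine max_le ?_ ?_
  · exact (hX p.1 q.1 r.1).trans (max_le_max (le_max_left _ _) (le_max_left _ _))
  · exact (hY p.2 q.2 r.2).trans (max_le_max (le_max_right _ _) (le_max_right _ _))

/-- Proposition 3.4: for a partial distance-preserving metric `d ≥ d_∞` on `X × Y`,
`(X × Y, d)` is ultrametric iff `N_ε(W × Z) = M_ε(W × Z)` and
`M_ε(W × Z) = M_ε(W) · M_ε(Z)` hold for all compact `W ⊆ X`, `Z ⊆ Y` and all `ε > 0`. -/
theorem ultrametric_iff_covering_packing_multiplicative {X Y : Type u} [MetricSpace X]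
    [MetricSpace Y] [Nonempty X] [Nonempty Y]
    (d : X × Y → X × Y → ℝ) (hmetric : IsMetricOn d) (hpdp : PartialDistPreserving d)
    (hlow : ∀ p q : X × Y, max (dist p.1 q.1) (dist p.2 q.2) ≤ d p q) :
    IsUltrametricOn d ↔
      ∀ (W : Set X) (Z : Set Y), IsCompact W → IsCompact Z → ∀ ε : ℝ, 0 < ε →
        coveringNumberIn d ε (W ×ˢ Z) (W ×ˢ Z) = packingNumberSup d ε (W ×ˢ Z) ∧
        packingNumberSup d ε (W ×ˢ Z) =
          packingNumberSup dist ε W * packingNumberSup dist ε Z := by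
  constructor
  · -- forward direction
    intro hU W Z _ _ ε hε
    have hdd : d = dist := by
      funext p q
      refine le_antisymm ?_ (by rw [Prod.dist_eq]; exact hlow p q)
      rw [Prod.dist_eq]
      calc d p q ≤ max (d p (q.1, p.2)) (d (q.1, p.2) q) := hU p (q.1, p.2) q
        _ = max (dist p.1 q.1) (dist p.2 q.2) := by
            rw [hpdp.1 p.1 q.1 p.2, hpdp.2 q.1 p.2 q.2]
    have hXu : ∀ a b c : X, dist a c ≤ max (dist a b) (dist b c) := by
      intro a b c
      obtain ⟨y⟩ := ‹Nonempty Y›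
      have hh := hU (a, y) (b, y) (c, y)
      rwa [hpdp.1 a c y, hpdp.1 a b y, hpdp.1 b c y] at hh
    have hYu : ∀ a b c : Y, dist a c ≤ max (dist a b) (dist b c) := by
      intro a b c
      obtain ⟨x⟩ := ‹Nonempty X›
      have hh := hU (x, a) (x, b) (x, c)
      rwa [hpdp.2 x a c, hpdp.2 x a b, hpdp.2 x b c] at hh
    obtain ⟨TW, hTW, hTWd, hTWn⟩ := exists_disting_net hε W
    obtain ⟨TZ, hTZ, hTZd, hTZn⟩ := exists_disting_net hε Z
    have hTP : TW ×ˢ TZ ⊆ W ×ˢ Z := Set.prod_mono hTW hTZ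
    have hTPd : IsDistinguishable dist ε (TW ×ˢ TZ) := by
      rintro ⟨a, b⟩ ⟨ha, hb⟩ ⟨a', b'⟩ ⟨ha', hb'⟩ hne
      rw [Prod.dist_eq]
      rcases eq_or_ne a a' with hh | hh
      · have hbb : b ≠ b' := by
          rintro rfl; exact hne (by rw [hh])
        exact lt_max_of_lt_right (hTZd b hb b' hb' hbb)
      · exact lt_max_of_lt_left (hTWd a ha a' ha' hh)
    have hTPn : IsNet dist ε (W ×ˢ Z) (TW ×ˢ TZ) := by
      rintro ⟨w, z⟩ ⟨hw, hz⟩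
      obtain ⟨t, ht, htd⟩ := hTWn w hw
      obtain ⟨s, hs, hsd⟩ := hTZn z hz
      exact ⟨(t, s), ⟨ht, hs⟩, by rw [Prod.dist_eq]; exact max_le htd hsd⟩
    obtain ⟨hc, hp⟩ := key_lemma (prod_ultra hXu hYu) hTP hTPd hTPn
    obtain ⟨-, hpW⟩ := key_lemma hXu hTW hTWd hTWn
    obtain ⟨-, hpZ⟩ := key_lemma hYu hTZ hTZd hTZn
    rw [hdd]
    refine ⟨hc.trans hp.symm, ?_⟩
    rw [hp, hpW, hpZ]
    calc #(TW ×ˢ TZ : Set (X × Y)) = #(TW × TZ : Type u) :=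
          Cardinal.mk_congr (Equiv.Set.prod TW TZ)
      _ = #TW * #TZ := by rw [Cardinal.mk_prod, Cardinal.lift_id, Cardinal.lift_id]
  · -- backward direction
    intro h
    have hbdd : ∀ (K : Set (X × Y)) (μ : ℝ),
        BddAbove {κ | ∃ A : Set (X × Y), A ⊆ K ∧ IsDistinguishable d μ A ∧ #A = κ} := by
      intro K μ
      exact ⟨#(X × Y), by rintro κ ⟨A, -, -, rfl⟩; exact Cardinal.mk_set_le A⟩
    -- Step 1: d is bounded above by the sup metric
    have hle : ∀ p q : X × Y, d p q ≤ max (dist p.1 q.1) (dist p.2 q.2) := by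
      intro p q
      by_contra hcon
      push_neg at hcon
      set m := max (dist p.1 q.1) (dist p.2 q.2) with hm
      have hmnn : (0:ℝ) ≤ m := le_trans dist_nonneg (le_max_left _ _)
      have hm0 : 0 < m := by
        rcases hmnn.lt_or_eq with h0 | h0
        · exact h0
        · exfalso
          have h1 : p.1 = q.1 :=
            dist_le_zero.mp (by rw [h0]; exact le_max_left _ _)
          have h2 : p.2 = q.2 :=
            dist_le_zero.mp (by rw [h0]; exact le_max_right _ _)
          have hpq : p = q := Prod.ext h1 h2
          rw [hpq, hmetric.1 q] at hcon
          exact absurd hcon (not_lt.mpr hmnn)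
      obtain ⟨-, heq2⟩ := h {p.1, q.1} {p.2, q.2} (Set.toFinite _).isCompact
        (Set.toFinite _).isCompact m hm0
      have hW1 : packingNumberSup dist m ({p.1, q.1} : Set X) ≤ 1 := by
        refine csSup_le ⟨0, ∅, Set.empty_subset _,
          fun x hx => absurd hx (Set.notMem_empty x), Cardinal.mk_emptyCollection X⟩ ?_
        rintro κ ⟨A, hA, hAd, rfl⟩
        rw [Cardinal.mk_le_one_iff_set_subsingleton]
        intro x hx y hy
        by_contra hxy
        have hlt := hAd x hx y hy hxy
        have hub : dist x y ≤ m := by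
          have hx' := hA hx
          have hy' := hA hy
          simp only [Set.mem_insert_iff, Set.mem_singleton_iff] at hx' hy'
          rcases hx' with rfl | rfl <;> rcases hy' with rfl | rfl
          · simpa using hmnn
          · rw [hm]; exact le_max_left _ _
          · rw [dist_comm, hm]; exact le_max_left _ _
          · simpa using hmnn
        linarith
      have hZ1 : packingNumberSup dist m ({p.2, q.2} : Set Y) ≤ 1 := by
        refine csSup_le ⟨0, ∅, Set.empty_subset _,
          fun x hx => absurd hx (Set.notMem_empty x), Cardinal.mk_emptyCollection Y⟩ ?_
        rintro κ ⟨A, hA, hAd, rfl⟩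
        rw [Cardinal.mk_le_one_iff_set_subsingleton]
        intro x hx y hy
        by_contra hxy
        have hlt := hAd x hx y hy hxy
        have hub : dist x y ≤ m := by
          have hx' := hA hx
          have hy' := hA hy
          simp only [Set.mem_insert_iff, Set.mem_singleton_iff] at hx' hy'
          rcases hx' with rfl | rfl <;> rcases hy' with rfl | rfl
          · simpa using hmnn
          · rw [hm]; exact le_max_right _ _
          · rw [dist_comm, hm]; exact le_max_right _ _
          · simpa using hmnn
        linarith
      have hpq : p ≠ q := by
        rintro rfl
        rw [hmetric.1 p] at hcon
        exact absurd hcon (not_lt.mpr hmnn)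
      have hmem : #({p, q} : Set (X × Y)) ∈
          {κ | ∃ A : Set (X × Y), A ⊆ ({p.1, q.1} : Set X) ×ˢ ({p.2, q.2} : Set Y) ∧
            IsDistinguishable d m A ∧ #A = κ} := by
        refine ⟨{p, q}, ?_, ?_, rfl⟩
        · intro u hu
          simp only [Set.mem_insert_iff, Set.mem_singleton_iff] at hu
          rcases hu with rfl | rfl
          · exact ⟨Set.mem_insert _ _, Set.mem_insert _ _⟩
          · exact ⟨Set.mem_insert_of_mem _ rfl, Set.mem_insert_of_mem _ rfl⟩
        · intro u hu v hv huv
          simp only [Set.mem_insert_iff, Set.mem_singleton_iff] at hu hv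
          rcases hu with rfl | rfl <;> rcases hv with rfl | rfl
          · exact absurd rfl huv
          · exact hcon
          · rw [hmetric.2.2.1]; exact hcon
          · exact absurd rfl huv
      have hcard : #({p, q} : Set (X × Y)) = 2 := by
        rw [Cardinal.mk_insert (by simpa using hpq), Cardinal.mk_singleton]
        exact one_add_one_eq_two
      have h2 : (2 : Cardinal) ≤
          packingNumberSup d m (({p.1, q.1} : Set X) ×ˢ ({p.2, q.2} : Set Y)) :=
        hcard ▸ le_csSup (hbdd _ _) hmem
      rw [heq2] at h2
      have h3 : packingNumberSup dist m ({p.1, q.1} : Set X) *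
          packingNumberSup dist m ({p.2, q.2} : Set Y) ≤ 1 := by
        calc _ ≤ 1 * 1 := mul_le_mul' hW1 hZ1
          _ = 1 := one_mul 1
      exact absurd (h2.trans h3) (by norm_num)
    -- Step 2: the factors are ultrametric
    have hXu : ∀ a b c : X, dist a c ≤ max (dist a b) (dist b c) := by
      intro a b c
      by_contra hcon
      push_neg at hcon
      set m := max (dist a b) (dist b c) with hm
      have hmnn : (0:ℝ) ≤ m := le_trans dist_nonneg (le_max_left _ _)
      have hm0 : 0 < m := by
        rcases hmnn.lt_or_eq with h0 | h0
        · exact h0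
        · exfalso
          have h1 : a = b := dist_le_zero.mp (by rw [h0]; exact le_max_left _ _)
          have h2 : b = c := dist_le_zero.mp (by rw [h0]; exact le_max_right _ _)
          rw [h1, h2, dist_self] at hcon
          exact absurd hcon (not_lt.mpr hmnn)
      obtain ⟨y⟩ := ‹Nonempty Y›
      obtain ⟨heq1, -⟩ := h {a, b, c} {y} (Set.toFinite _).isCompact
        (Set.toFinite _).isCompact m hm0
      have hcov : coveringNumberIn d m (({a, b, c} : Set X) ×ˢ ({y} : Set Y))
          (({a, b, c} : Set X) ×ˢ ({y} : Set Y)) ≤ 1 := by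
        refine csInf_le' ⟨{(b, y)}, ?_, ?_, Cardinal.mk_singleton _⟩
        · rw [Set.singleton_subset_iff]
          exact ⟨by simp, rfl⟩
        · rintro ⟨w, y'⟩ ⟨hw, hy'⟩
          refine ⟨(b, y), rfl, ?_⟩
          have hy : y' = y := hy'
          subst hy
          rw [hpdp.1 w b y']
          simp only [Set.mem_insert_iff, Set.mem_singleton_iff] at hw
          rcases hw with rfl | rfl | rfl
          · rw [hm]; exact le_max_left _ _
          · simpa using hm0.le
          · rw [dist_comm, hm]; exact le_max_right _ _
      have hac : a ≠ c := by
        rintro rfl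
        rw [dist_self] at hcon
        exact absurd hcon (not_lt.mpr hmnn)
      have hmem2 : #({(a, y), (c, y)} : Set (X × Y)) ∈
          {κ | ∃ A : Set (X × Y), A ⊆ ({a, b, c} : Set X) ×ˢ ({y} : Set Y) ∧
            IsDistinguishable d m A ∧ #A = κ} := by
        refine ⟨_, ?_, ?_, rfl⟩
        · intro u hu
          simp only [Set.mem_insert_iff, Set.mem_singleton_iff] at hu
          rcases hu with rfl | rfl
          · exact ⟨by simp, rfl⟩
          · exact ⟨by simp, rfl⟩
        · intro u hu v hv huv
          have hd : m < d (a, y) (c, y) := by rw [hpdp.1 a c y]; exact hcon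
          simp only [Set.mem_insert_iff, Set.mem_singleton_iff] at hu hv
          rcases hu with rfl | rfl <;> rcases hv with rfl | rfl
          · exact absurd rfl huv
          · exact hd
          · rw [hmetric.2.2.1]; exact hd
          · exact absurd rfl huv
      have hcard2 : #({(a, y), (c, y)} : Set (X × Y)) = 2 := by
        rw [Cardinal.mk_insert (by simp [hac]), Cardinal.mk_singleton]
        exact one_add_one_eq_two
      have h2 : (2 : Cardinal) ≤
          packingNumberSup d m (({a, b, c} : Set X) ×ˢ ({y} : Set Y)) :=
        hcard2 ▸ le_csSup (hbdd _ _) hmem2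
      rw [← heq1] at h2
      exact absurd (h2.trans hcov) (by norm_num)
    have hYu : ∀ a b c : Y, dist a c ≤ max (dist a b) (dist b c) := by
      intro a b c
      by_contra hcon
      push_neg at hcon
      set m := max (dist a b) (dist b c) with hm
      have hmnn : (0:ℝ) ≤ m := le_trans dist_nonneg (le_max_left _ _)
      have hm0 : 0 < m := by
        rcases hmnn.lt_or_eq with h0 | h0
        · exact h0
        · exfalso
          have h1 : a = b := dist_le_zero.mp (by rw [h0]; exact le_max_left _ _)
          have h2 : b = c := dist_le_zero.mp (by rw [h0]; exact le_max_right _ _)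
          rw [h1, h2, dist_self] at hcon
          exact absurd hcon (not_lt.mpr hmnn)
      obtain ⟨x⟩ := ‹Nonempty X›
      obtain ⟨heq1, -⟩ := h {x} {a, b, c} (Set.toFinite _).isCompact
        (Set.toFinite _).isCompact m hm0
      have hcov : coveringNumberIn d m (({x} : Set X) ×ˢ ({a, b, c} : Set Y))
          (({x} : Set X) ×ˢ ({a, b, c} : Set Y)) ≤ 1 := by
        refine csInf_le' ⟨{(x, b)}, ?_, ?_, Cardinal.mk_singleton _⟩
        · rw [Set.singleton_subset_iff]
          exact ⟨rfl, by simp⟩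
        · rintro ⟨x', w⟩ ⟨hx', hw⟩
          refine ⟨(x, b), rfl, ?_⟩
          have hx : x' = x := hx'
          subst hx
          rw [hpdp.2 x' w b]
          simp only [Set.mem_insert_iff, Set.mem_singleton_iff] at hw
          rcases hw with rfl | rfl | rfl
          · rw [hm]; exact le_max_left _ _
          · simpa using hm0.le
          · rw [dist_comm, hm]; exact le_max_right _ _
      have hac : a ≠ c := by
        rintro rfl
        rw [dist_self] at hcon
        exact absurd hcon (not_lt.mpr hmnn)
      have hmem2 : #({(x, a), (x, c)} : Set (X × Y)) ∈
          {κ | ∃ A : Set (X × Y), A ⊆ ({x} : Set X) ×ˢ ({a, b, c} : Set Y) ∧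
            IsDistinguishable d m A ∧ #A = κ} := by
        refine ⟨_, ?_, ?_, rfl⟩
        · intro u hu
          simp only [Set.mem_insert_iff, Set.mem_singleton_iff] at hu
          rcases hu with rfl | rfl
          · exact ⟨rfl, by simp⟩
          · exact ⟨rfl, by simp⟩
        · intro u hu v hv huv
          have hd : m < d (x, a) (x, c) := by rw [hpdp.2 x a c]; exact hcon
          simp only [Set.mem_insert_iff, Set.mem_singleton_iff] at hu hv
          rcases hu with rfl | rfl <;> rcases hv with rfl | rfl
          · exact absurd rfl huv
          · exact hd
          · rw [hmetric.2.2.1]; exact hd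
          · exact absurd rfl huv
      have hcard2 : #({(x, a), (x, c)} : Set (X × Y)) = 2 := by
        rw [Cardinal.mk_insert (by simp [hac]), Cardinal.mk_singleton]
        exact one_add_one_eq_two
      have h2 : (2 : Cardinal) ≤
          packingNumberSup d m (({x} : Set X) ×ˢ ({a, b, c} : Set Y)) :=
        hcard2 ▸ le_csSup (hbdd _ _) hmem2
      rw [← heq1] at h2
      exact absurd (h2.trans hcov) (by norm_num)
    -- conclude
    intro p q r
    calc d p r ≤ max (dist p.1 r.1) (dist p.2 r.2) := hle p r
      _ = dist p r := (Prod.dist_eq).symm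
      _ ≤ max (dist p q) (dist q r) := prod_ultra hXu hYu p q r
      _ ≤ max (d p q) (d q r) :=
          max_le_max (by rw [Prod.dist_eq]; exact hlow p q)
            (by rw [Prod.dist_eq]; exact hlow q r)
end

section
/- Let (X,d_X) and (Y,d_Y) be ultrametric spaces and let d be a partial distance-preserving metric on X × Y such that max{d_X(x₁,x₂), d_Y(y₁,y₂)} ≤ d((x₁,y₁),(x₂,y₂)) for all (x₁,y₁), (x₂,y₂) ∈ X × Y. Suppose that N_ε(W × Z) = N_ε(W) · N_ε(Z) holds for all compact sets W ⊆ X, Z ⊆ Y and every ε > 0 (covering numbers on W × Z computed with respect to d). Then min{d((x₁,y₁),(x₂,y₂)), d((x₂,y₁),(x₁,y₂))} = max{d_X(x₁,x₂), d_Y(y₁,y₂)} for all x₁, x₂ ∈ X and y₁, y₂ ∈ Y. -/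
open Cardinal Set

universe u

lemma cov_pair_eq_one {α : Type u} [MetricSpace α] {a b : α} {ε : ℝ} (hε : 0 ≤ ε)
    (h : dist a b ≤ ε) : coveringNumberIn dist ε ({a, b} : Set α) {a, b} = 1 := by
  have hmem : (1 : Cardinal.{u}) ∈
      {κ | ∃ C : Set α, C ⊆ ({a, b} : Set α) ∧ IsNet dist ε ({a, b} : Set α) C ∧ #C = κ} := by
    refine ⟨{a}, by simp, ?_, Cardinal.mk_singleton a⟩
    intro w hw
    refine ⟨a, rfl, ?_⟩
    rcases hw with hw | hw
    · rw [hw]; simpa using hε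
    · rw [Set.mem_singleton_iff] at hw
      rw [hw, dist_comm]; exact h
  refine le_antisymm (csInf_le' hmem) (le_csInf ⟨1, hmem⟩ ?_)
  rintro κ ⟨C, hCsub, hnet, rfl⟩
  obtain ⟨c, hc, -⟩ := hnet a (by simp)
  exact Cardinal.one_le_iff_ne_zero.2 (Cardinal.mk_ne_zero_iff.2 ⟨⟨c, hc⟩⟩)

/-- Proposition 3.7: for ultrametric spaces `X`, `Y` and a partial distance-preserving metric
`d ≥ d_∞` on `X × Y`, if the covering numbers are multiplicative on compact sets, then
`min {d((x₁,y₁),(x₂,y₂)), d((x₂,y₁),(x₁,y₂))} = max {d_X(x₁,x₂), d_Y(y₁,y₂)}`. -/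

theorem min_dist_eq_max_of_covering_multiplicative {X Y : Type u} [MetricSpace X]
    [MetricSpace Y]
    (hX : ∀ x y z : X, dist x z ≤ max (dist x y) (dist y z))
    (hY : ∀ x y z : Y, dist x z ≤ max (dist x y) (dist y z))
    (d : X × Y → X × Y → ℝ) (hmetric : IsMetricOn d) (hpdp : PartialDistPreserving d)
    (hlow : ∀ p q : X × Y, max (dist p.1 q.1) (dist p.2 q.2) ≤ d p q)
    (hcov : ∀ (W : Set X) (Z : Set Y), IsCompact W → IsCompact Z → ∀ ε : ℝ, 0 < ε →
      coveringNumberIn d ε (W ×ˢ Z) (W ×ˢ Z) =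
        coveringNumberIn dist ε W W * coveringNumberIn dist ε Z Z)
    (x₁ x₂ : X) (y₁ y₂ : Y) :
    min (d (x₁, y₁) (x₂, y₂)) (d (x₂, y₁) (x₁, y₂)) = max (dist x₁ x₂) (dist y₁ y₂) := by
  set m := max (dist x₁ x₂) (dist y₁ y₂) with hm
  have hm0 : 0 ≤ m := le_trans dist_nonneg (le_max_left _ _)
  have h1 : m ≤ d (x₁, y₁) (x₂, y₂) := hlow (x₁, y₁) (x₂, y₂)
  have h2 : m ≤ d (x₂, y₁) (x₁, y₂) := by
    have := hlow (x₂, y₁) (x₁, y₂)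
    simpa [dist_comm x₂ x₁, hm] using this
  refine le_antisymm ?_ (le_min h1 h2)
  rcases hm0.eq_or_lt with hm0' | hmpos
  · -- m = 0, so x₁ = x₂ and y₁ = y₂
    have hx : x₁ = x₂ := dist_le_zero.1 (by rw [hm0']; exact le_max_left _ _)
    have hy : y₁ = y₂ := dist_le_zero.1 (by rw [hm0']; exact le_max_right _ _)
    subst hx; subst hy
    simp only [min_self]
    rw [hmetric.1]
    exact hm0
  · have hW : IsCompact ({x₁, x₂} : Set X) := (Set.toFinite _).isCompact
    have hZ : IsCompact ({y₁, y₂} : Set Y) := (Set.toFinite _).isCompact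
    have hcW : coveringNumberIn dist m ({x₁, x₂} : Set X) {x₁, x₂} = 1 :=
      cov_pair_eq_one hm0 (le_max_left _ _)
    have hcZ : coveringNumberIn dist m ({y₁, y₂} : Set Y) {y₁, y₂} = 1 :=
      cov_pair_eq_one hm0 (le_max_right _ _)
    have hprod := hcov _ _ hW hZ m hmpos
    rw [hcW, hcZ, one_mul] at hprod
    have hne : {κ | ∃ C : Set (X × Y), C ⊆ (({x₁, x₂} : Set X) ×ˢ ({y₁, y₂} : Set Y)) ∧
        IsNet d m (({x₁, x₂} : Set X) ×ˢ ({y₁, y₂} : Set Y)) C ∧ #C = κ}.Nonempty := by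
      refine ⟨_, (({x₁, x₂} : Set X) ×ˢ ({y₁, y₂} : Set Y)), subset_rfl, ?_, rfl⟩
      intro w hw
      exact ⟨w, hw, by rw [hmetric.1]; exact hm0⟩
    have hmem := csInf_mem hne
    rw [show sInf _ = coveringNumberIn d m (({x₁, x₂} : Set X) ×ˢ ({y₁, y₂} : Set Y))
        (({x₁, x₂} : Set X) ×ˢ ({y₁, y₂} : Set Y)) from rfl, hprod] at hmem
    obtain ⟨C, hCsub, hnet, hC1⟩ := hmem
    have hCne : C.Nonempty := by
      rw [← Set.nonempty_coe_sort, ← Cardinal.mk_ne_zero_iff, hC1]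
      exact one_ne_zero
    have hss : C.Subsingleton := by
      rw [← Cardinal.mk_le_one_iff_set_subsingleton, hC1]
    obtain ⟨c, hc⟩ := hCne
    obtain ⟨a, b⟩ := c
    have key : ∀ w ∈ (({x₁, x₂} : Set X) ×ˢ ({y₁, y₂} : Set Y)), d w (a, b) ≤ m := by
      intro w hw
      obtain ⟨c', hc', hd⟩ := hnet w hw
      rwa [hss hc' hc] at hd
    have hsymm := hmetric.2.2.1
    have ha : a ∈ ({x₁, x₂} : Set X) := (hCsub hc).1
    have hb : b ∈ ({y₁, y₂} : Set Y) := (hCsub hc).2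
    rcases ha with rfl | ha <;> [skip; rcases ha with rfl] <;>
      (rcases hb with rfl | hb <;> [skip; rcases hb with rfl])
    · refine le_trans (min_le_left _ _) ?_
      rw [hsymm]
      exact key (x₂, y₂) (by simp)
    · refine le_trans (min_le_right _ _) ?_
      exact key (x₂, y₁) (by simp)
    · refine le_trans (min_le_right _ _) ?_
      rw [hsymm]
      exact key (x₁, y₂) (by simp)
    · refine le_trans (min_le_left _ _) ?_
      exact key (x₁, y₁) (by simp)
end

section
/- Let (X,d_X) and (Y,d_Y) be nonempty ultrametric spaces and let d be a partial distance-preserving metric on X × Y such that max{d_X(x₁,x₂), d_Y(y₁,y₂)} ≤ d((x₁,y₁),(x₂,y₂)) for all (x₁,y₁), (x₂,y₂) ∈ X × Y, and suppose d((x₁,y₁),(x₂,y₂)) = d((x₂,y₁),(x₁,y₂)) for all x₁, x₂ ∈ X and y₁, y₂ ∈ Y. Then (X × Y, d) is ultrametric if and only if N_ε(W × Z) = N_ε(W) · N_ε(Z) holds for all compact sets W ⊆ X, Z ⊆ Y and every ε > 0, where the covering number on W × Z is computed with respect to d. -/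
open Cardinal Set

universe u

section Aux

variable {α : Type u} {ρ : α → α → ℝ} {ε : ℝ}

lemma mk_set_prod' {β γ : Type u} (s : Set β) (t : Set γ) :
    #(↥(s ×ˢ t)) = #s * #t := by
  rw [Cardinal.mk_congr (Equiv.Set.prod s t), Cardinal.mk_prod, Cardinal.lift_id,
    Cardinal.lift_id]

lemma isNet_self (hrefl : ∀ x, ρ x x = 0) (hε : 0 ≤ ε) (S : Set α) : IsNet ρ ε S S :=
  fun w hw => ⟨w, hw, by rw [hrefl]; exact hε⟩

lemma covSet_nonempty (hrefl : ∀ x, ρ x x = 0) (hε : 0 ≤ ε) (S : Set α) :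
    {κ | ∃ C : Set α, C ⊆ S ∧ IsNet ρ ε S C ∧ #C = κ}.Nonempty :=
  ⟨#S, S, subset_rfl, isNet_self hrefl hε S, rfl⟩

lemma exists_min_net (hrefl : ∀ x, ρ x x = 0) (hε : 0 ≤ ε) (S : Set α) :
    ∃ C : Set α, C ⊆ S ∧ IsNet ρ ε S C ∧ #C = coveringNumberIn ρ ε S S :=
  csInf_mem (covSet_nonempty hrefl hε S)

lemma exists_maximal_dist (S : Set α) :
    ∃ A, Maximal (fun B => B ⊆ S ∧ IsDistinguishable ρ ε B) A := by
  apply zorn_subset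
  intro c hc hchain
  refine ⟨⋃₀ c, ⟨?_, ?_⟩, fun s hs => subset_sUnion_of_mem hs⟩
  · exact sUnion_subset fun s hs => (hc hs).1
  · intro x hx y hy hxy
    obtain ⟨A, hA, hxA⟩ := hx
    obtain ⟨B, hB, hyB⟩ := hy
    rcases hchain.total hA hB with h | h
    · exact (hc hB).2 x (h hxA) y hyB hxy
    · exact (hc hA).2 x hxA y (h hyB) hxy

lemma maximal_dist_isNet (hrefl : ∀ x, ρ x x = 0) (hsym : ∀ x y, ρ x y = ρ y x)
    (hε : 0 ≤ ε) {S A : Set α} (hA : Maximal (fun B => B ⊆ S ∧ IsDistinguishable ρ ε B) A) :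
    IsNet ρ ε S A := by
  intro w hw
  by_cases hwA : w ∈ A
  · exact ⟨w, hwA, by rw [hrefl]; exact hε⟩
  by_contra hcon
  push_neg at hcon
  have hins : insert w A ⊆ S ∧ IsDistinguishable ρ ε (insert w A) := by
    refine ⟨insert_subset hw hA.1.1, ?_⟩
    intro x hx y hy hxy
    rcases hx with rfl | hx
    · rcases hy with rfl | hy
      · exact absurd rfl hxy
      · exact hcon y hy
    · rcases hy with rfl | hy
      · rw [hsym]; exact hcon x hx
      · exact hA.1.2 x hx y hy hxy
  have := hA.2 hins (subset_insert w A)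
  exact hwA (this (mem_insert w A))

/-- In an ultrametric, any distinguishable subset of `S` injects into any net of `S`. -/
lemma dist_card_le_net (hU : IsUltrametricOn ρ) (hsym : ∀ x y, ρ x y = ρ y x)
    {S A C : Set α} (hAS : A ⊆ S) (hA : IsDistinguishable ρ ε A) (hC : IsNet ρ ε S C) :
    #A ≤ #C := by
  have hchoice : ∀ a : A, ∃ c : C, ρ a c ≤ ε := by
    rintro ⟨a, ha⟩
    obtain ⟨c, hcC, hc⟩ := hC a (hAS ha)
    exact ⟨⟨c, hcC⟩, hc⟩
  choose f hf using hchoice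
  apply Cardinal.mk_le_of_injective (f := f)
  rintro ⟨a, ha⟩ ⟨b, hb⟩ hab
  by_contra hne
  have hne' : a ≠ b := fun h => hne (Subtype.ext h)
  have h1 : ρ a (f ⟨a, ha⟩) ≤ ε := hf ⟨a, ha⟩
  have h2 : ρ b (f ⟨a, ha⟩) ≤ ε := by rw [hab]; exact hf ⟨b, hb⟩
  have : ρ a b ≤ max (ρ a (f ⟨a, ha⟩)) ((ρ (f ⟨a, ha⟩) b)) := hU _ _ _
  rw [hsym (f ⟨a, ha⟩) b] at this
  exact absurd (hA a ha b hb hne') (not_lt.mpr (this.trans (max_le h1 h2)))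

lemma coveringNumberIn_le {S A : Set α} (hAS : A ⊆ S) (hA : IsNet ρ ε S A) :
    coveringNumberIn ρ ε S S ≤ #A := csInf_le' ⟨A, hAS, hA, rfl⟩

end Aux

/-- Multiplicativity of covering numbers for the sup metric on a product of
ultrametric spaces. -/
lemma covering_mul {X Y : Type u} [MetricSpace X] [MetricSpace Y]
    (hX : ∀ x y z : X, dist x z ≤ max (dist x y) (dist y z))
    (hY : ∀ x y z : Y, dist x z ≤ max (dist x y) (dist y z))
    (d : X × Y → X × Y → ℝ)
    (hd : ∀ p q : X × Y, d p q = max (dist p.1 q.1) (dist p.2 q.2))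
    {ε : ℝ} (hε : 0 ≤ ε) (W : Set X) (Z : Set Y) :
    coveringNumberIn d ε (W ×ˢ Z) (W ×ˢ Z) =
      coveringNumberIn dist ε W W * coveringNumberIn dist ε Z Z := by
  have hdrefl : ∀ p : X × Y, d p p = 0 := by
    intro p; rw [hd]; simp
  have hdsym : ∀ p q : X × Y, d p q = d q p := by
    intro p q; rw [hd, hd, dist_comm, dist_comm p.2]
  have hdU : IsUltrametricOn d := by
    intro p q r
    rw [hd, hd, hd]
    refine max_le ?_ ?_
    · exact (hX p.1 q.1 r.1).trans (max_le_max (le_max_left _ _) (le_max_left _ _))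
    · exact (hY p.2 q.2 r.2).trans (max_le_max (le_max_right _ _) (le_max_right _ _))
  apply le_antisymm
  · -- upper bound: product of minimal nets
    obtain ⟨CW, hCWs, hCWn, hCW⟩ := exists_min_net (fun x : X => dist_self x) hε W
    obtain ⟨CZ, hCZs, hCZn, hCZ⟩ := exists_min_net (fun y : Y => dist_self y) hε Z
    have hnet : IsNet d ε (W ×ˢ Z) (CW ×ˢ CZ) := by
      rintro ⟨w, z⟩ ⟨hw, hz⟩
      obtain ⟨cw, hcw, hcw'⟩ := hCWn w hw
      obtain ⟨cz, hcz, hcz'⟩ := hCZn z hz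
      exact ⟨(cw, cz), ⟨hcw, hcz⟩, by rw [hd]; exact max_le hcw' hcz'⟩
    calc coveringNumberIn d ε (W ×ˢ Z) (W ×ˢ Z) ≤ #(↥(CW ×ˢ CZ)) :=
          coveringNumberIn_le (prod_mono hCWs hCZs) hnet
      _ = _ := by rw [mk_set_prod', hCW, hCZ]
  · -- lower bound: product of maximal distinguishable sets injects into any net
    obtain ⟨A, hA⟩ := exists_maximal_dist (ρ := dist) (ε := ε) W
    obtain ⟨B, hB⟩ := exists_maximal_dist (ρ := dist) (ε := ε) Z
    obtain ⟨C, hCs, hCn, hC⟩ := exists_min_net hdrefl hε (W ×ˢ Z)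
    have hAnet : IsNet dist ε W A :=
      maximal_dist_isNet (fun x : X => dist_self x) (fun x y => dist_comm x y) hε hA
    have hBnet : IsNet dist ε Z B :=
      maximal_dist_isNet (fun x : Y => dist_self x) (fun x y => dist_comm x y) hε hB
    have h1 : coveringNumberIn dist ε W W ≤ #A := coveringNumberIn_le hA.1.1 hAnet
    have h2 : coveringNumberIn dist ε Z Z ≤ #B := coveringNumberIn_le hB.1.1 hBnet
    have hABdist : IsDistinguishable d ε (A ×ˢ B) := by
      rintro ⟨a, b⟩ ⟨ha, hb⟩ ⟨a', b'⟩ ⟨ha', hb'⟩ hne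
      rw [hd]
      rcases eq_or_ne a a' with rfl | haa
      · rcases eq_or_ne b b' with rfl | hbb
        · exact absurd rfl hne
        · exact lt_max_of_lt_right (hB.1.2 b hb b' hb' hbb)
      · exact lt_max_of_lt_left (hA.1.2 a ha a' ha' haa)
    have h3 : #(↥(A ×ˢ B)) ≤ #C :=
      dist_card_le_net hdU hdsym (prod_mono hA.1.1 hB.1.1) hABdist hCn
    rw [mk_set_prod'] at h3
    calc coveringNumberIn dist ε W W * coveringNumberIn dist ε Z Z
        ≤ #A * #B := mul_le_mul' h1 h2
      _ ≤ #C := h3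
      _ = _ := hC

theorem ultrametric_iff_covering_multiplicative' {X Y : Type u} [MetricSpace X] [MetricSpace Y]
    [Nonempty X] [Nonempty Y]
    (hX : ∀ x y z : X, dist x z ≤ max (dist x y) (dist y z))
    (hY : ∀ x y z : Y, dist x z ≤ max (dist x y) (dist y z))
    (d : X × Y → X × Y → ℝ) (hmetric : IsMetricOn d) (hpdp : PartialDistPreserving d)
    (hlow : ∀ p q : X × Y, max (dist p.1 q.1) (dist p.2 q.2) ≤ d p q)
    (hsymm : ∀ (x₁ x₂ : X) (y₁ y₂ : Y), d (x₁, y₁) (x₂, y₂) = d (x₂, y₁) (x₁, y₂)) :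
    IsUltrametricOn d ↔
      ∀ (W : Set X) (Z : Set Y), IsCompact W → IsCompact Z → ∀ ε : ℝ, 0 < ε →
        coveringNumberIn d ε (W ×ˢ Z) (W ×ˢ Z) =
          coveringNumberIn dist ε W W * coveringNumberIn dist ε Z Z := by
  constructor
  · intro hU W Z _ _ ε hε
    have hd : ∀ p q : X × Y, d p q = max (dist p.1 q.1) (dist p.2 q.2) := by
      rintro ⟨x₁, y₁⟩ ⟨x₂, y₂⟩
      refine le_antisymm ?_ (hlow _ _)
      have h1 := hU (x₁, y₁) (x₂, y₁) (x₂, y₂)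
      rw [hpdp.1 x₁ x₂ y₁, hpdp.2 x₂ y₁ y₂] at h1
      exact h1
    exact covering_mul hX hY d hd hε.le W Z
  · intro hmul
    have key : ∀ (x₁ x₂ : X) (y₁ y₂ : Y),
        d (x₁, y₁) (x₂, y₂) ≤ max (dist x₁ x₂) (dist y₁ y₂) := by
      intro x₁ x₂ y₁ y₂
      by_contra hcon
      push_neg at hcon
      have hx : x₁ ≠ x₂ := by
        rintro rfl
        rw [hpdp.2] at hcon
        exact absurd (le_max_right _ _) hcon.not_ge
      have hy : y₁ ≠ y₂ := by
        rintro rfl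
        rw [hpdp.1] at hcon
        exact absurd (le_max_left _ _) hcon.not_ge
      set m := max (dist x₁ x₂) (dist y₁ y₂) with hm_def
      have hm : 0 < m := lt_max_of_lt_left (dist_pos.mpr hx)
      have hWc : IsCompact ({x₁, x₂} : Set X) :=
        ((finite_singleton x₂).insert x₁).isCompact
      have hZc : IsCompact ({y₁, y₂} : Set Y) :=
        ((finite_singleton y₂).insert y₁).isCompact
      have heq := hmul {x₁, x₂} {y₁, y₂} hWc hZc m hm
      have hNW : coveringNumberIn dist m ({x₁, x₂} : Set X) {x₁, x₂} = 1 := by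
        apply le_antisymm
        · have hnet : IsNet dist m ({x₁, x₂} : Set X) {x₁} := by
            rintro w (rfl | rfl)
            · exact ⟨w, rfl, by rw [dist_self]; exact hm.le⟩
            · exact ⟨x₁, rfl, by rw [dist_comm]; exact le_max_left _ _⟩
          have := coveringNumberIn_le (by simp) hnet
          rwa [Cardinal.mk_singleton] at this
        · refine le_csInf (covSet_nonempty (fun x => dist_self x) hm.le _) ?_
          rintro κ ⟨C, hCs, hCn, rfl⟩
          obtain ⟨c, hc, -⟩ := hCn x₁ (mem_insert _ _)
          exact Cardinal.one_le_iff_ne_zero.mpr (Cardinal.mk_ne_zero_iff.mpr ⟨⟨c, hc⟩⟩)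
      have hNZ : coveringNumberIn dist m ({y₁, y₂} : Set Y) {y₁, y₂} = 1 := by
        apply le_antisymm
        · have hnet : IsNet dist m ({y₁, y₂} : Set Y) {y₁} := by
            rintro w (rfl | rfl)
            · exact ⟨w, rfl, by rw [dist_self]; exact hm.le⟩
            · exact ⟨y₁, rfl, by rw [dist_comm]; exact le_max_right _ _⟩
          have := coveringNumberIn_le (by simp) hnet
          rwa [Cardinal.mk_singleton] at this
        · refine le_csInf (covSet_nonempty (fun y => dist_self y) hm.le _) ?_
          rintro κ ⟨C, hCs, hCn, rfl⟩
          obtain ⟨c, hc, -⟩ := hCn y₁ (mem_insert _ _)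
          exact Cardinal.one_le_iff_ne_zero.mpr (Cardinal.mk_ne_zero_iff.mpr ⟨⟨c, hc⟩⟩)
      rw [hNW, hNZ, one_mul] at heq
      have hdrefl : ∀ p : X × Y, d p p = 0 := hmetric.1
      obtain ⟨C, hCs, hCn, hC⟩ := exists_min_net hdrefl hm.le
        (({x₁, x₂} : Set X) ×ˢ ({y₁, y₂} : Set Y))
      rw [heq] at hC
      have hCne : C.Nonempty := by
        obtain ⟨c, hc, -⟩ := hCn (x₁, y₁) ⟨mem_insert _ _, mem_insert _ _⟩
        exact ⟨c, hc⟩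
      have hsub : C.Subsingleton :=
        Cardinal.mk_le_one_iff_set_subsingleton.mp hC.le
      obtain ⟨c, hcC⟩ := hCne
      have hCeq : C = {c} := eq_singleton_iff_unique_mem.mpr ⟨hcC, fun x hx => hsub hx hcC⟩
      subst hCeq
      obtain ⟨⟨a, b⟩, haC⟩ : ∃ p : X × Y, p = c := ⟨c, rfl⟩
      subst haC
      have hmem := hCs rfl
      have hnet' : ∀ p ∈ (({x₁, x₂} : Set X) ×ˢ ({y₁, y₂} : Set Y)), d p (a, b) ≤ m := by
        intro p hp
        obtain ⟨c', hc', hle⟩ := hCn p hp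
        rw [mem_singleton_iff] at hc'
        rwa [hc'] at hle
      have hD : m < d (x₁, y₁) (x₂, y₂) := hcon
      have hdsym : ∀ p q : X × Y, d p q = d q p := fun p q => hmetric.2.2.1 p q
      simp only [mem_prod, mem_insert_iff, mem_singleton_iff] at hmem
      obtain ⟨ha, hb⟩ := hmem
      rcases ha with rfl | rfl
      · rcases hb with rfl | rfl
        · have := hnet' (x₂, y₂) ⟨by simp, by simp⟩
          rw [hdsym] at this
          exact absurd this hD.not_ge
        · have := hnet' (x₂, y₁) ⟨by simp, by simp⟩
          rw [hsymm x₂ a y₁ b] at this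
          exact absurd this hD.not_ge
      · rcases hb with rfl | rfl
        · have := hnet' (x₁, y₂) ⟨by simp, by simp⟩
          rw [hsymm x₁ a y₂ b, hdsym (a, y₂) (x₁, b)] at this
          exact absurd this hD.not_ge
        · have := hnet' (x₁, y₁) ⟨by simp, by simp⟩
          exact absurd this hD.not_ge
    have hd : ∀ p q : X × Y, d p q = max (dist p.1 q.1) (dist p.2 q.2) := by
      rintro ⟨x₁, y₁⟩ ⟨x₂, y₂⟩
      exact le_antisymm (key x₁ x₂ y₁ y₂) (hlow _ _)
    intro p q r
    rw [hd, hd, hd]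
    refine max_le ?_ ?_
    · exact (hX p.1 q.1 r.1).trans (max_le_max (le_max_left _ _) (le_max_left _ _))
    · exact (hY p.2 q.2 r.2).trans (max_le_max (le_max_right _ _) (le_max_right _ _))


/-- Corollary 3.8: for nonempty ultrametric spaces `X`, `Y` and a partial
distance-preserving, symmetric-in-the-sense-of-(3:16) metric `d ≥ d_∞` on `X × Y`,
`(X × Y, d)` is ultrametric iff the covering numbers are multiplicative:
`N_ε(W × Z) = N_ε(W) · N_ε(Z)` for all compact `W ⊆ X`, `Z ⊆ Y` and all `ε > 0`. -/
theorem ultrametric_iff_covering_multiplicative {X Y : Type u} [MetricSpace X] [MetricSpace Y]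
    [Nonempty X] [Nonempty Y]
    (hX : ∀ x y z : X, dist x z ≤ max (dist x y) (dist y z))
    (hY : ∀ x y z : Y, dist x z ≤ max (dist x y) (dist y z))
    (d : X × Y → X × Y → ℝ) (hmetric : IsMetricOn d) (hpdp : PartialDistPreserving d)
    (hlow : ∀ p q : X × Y, max (dist p.1 q.1) (dist p.2 q.2) ≤ d p q)
    (hsymm : ∀ (x₁ x₂ : X) (y₁ y₂ : Y), d (x₁, y₁) (x₂, y₂) = d (x₂, y₁) (x₁, y₂)) :
    IsUltrametricOn d ↔
      ∀ (W : Set X) (Z : Set Y), IsCompact W → IsCompact Z → ∀ ε : ℝ, 0 < ε →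
        coveringNumberIn d ε (W ×ˢ Z) (W ×ˢ Z) =
          coveringNumberIn dist ε W W * coveringNumberIn dist ε Z Z := by
  exact ultrametric_iff_covering_multiplicative' hX hY d hmetric hpdp hlow hsymm
end
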